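/- arXiv:1510.03324 — 5 statements merged into one kernel-verified Lean document; each statement's English description precedes it below -/
import Mathlib

section
/- Let S and T be d-by-d integer matrices, each with irreducible characteristic polynomial over ℚ, that are diagonalizable over a finite Galois extension K of ℚ. If S and T have a common eigenvector v ∈ K^d (i.e., Sv = λ_S v and Tv = λ_T v for some λ_S, λ_T ∈ K with v ≠ 0), then S and T commute. -/
open Polynomial

lemma inv_submodule_top (d : ℕ) (M : Matrix (Fin d) (Fin d) ℚ)
    (hirr : Irreducible M.charpoly)
    (W : Submodule ℚ (Fin d → ℚ)) (hinv : ∀ w ∈ W, M.mulVec w ∈ W)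
    (w : Fin d → ℚ) (hwW : w ∈ W) (hw0 : w ≠ 0) : W = ⊤ := by
  classical
  rcases Nat.eq_zero_or_pos d with h0 | h0
  · subst h0; exact Subsingleton.elim _ _
  have : Nontrivial ℚ := inferInstance
  have hd : M.charpoly.natDegree = d := by
    simp [Matrix.charpoly_natDegree_eq_dim]
  set f : (Fin d → ℚ) →ₗ[ℚ] (Fin d → ℚ) := Matrix.toLinAlgEquiv' M with hf
  have hfapp : ∀ u, f u = M.mulVec u := by
    intro u
    simp [hf, Matrix.toLinAlgEquiv'_apply]
  have hpow : ∀ k : ℕ, (f ^ k) w ∈ W := by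
    intro k
    induction k with
    | zero => simpa using hwW
    | succ n ih =>
        rw [pow_succ']
        show f ((f ^ n) w) ∈ W
        rw [hfapp]
        exact hinv _ ih
  have hchar : (Polynomial.aeval f M.charpoly) w = 0 := by
    have h1 : Polynomial.aeval f M.charpoly
        = Matrix.toLinAlgEquiv' (Polynomial.aeval M M.charpoly) := by
      rw [hf, Polynomial.aeval_algHom_apply]
    rw [h1, Matrix.aeval_self_charpoly]
    simp
  have hLI : LinearIndependent ℚ (fun k : Fin d => (f ^ (k : ℕ)) w) := by
    by_contra hLI
    obtain ⟨a, hsum, k, hk⟩ := Fintype.not_linearIndependent_iff.mp hLI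
    set p : Polynomial ℚ := ∑ k : Fin d, Polynomial.C (a k) * Polynomial.X ^ (k : ℕ) with hp
    have hpeval : (Polynomial.aeval f p) w = 0 := by
      rw [hp]
      rw [map_sum]
      have : ∀ k : Fin d, (Polynomial.aeval f (Polynomial.C (a k) * Polynomial.X ^ (k : ℕ))) w
          = a k • (f ^ (k : ℕ)) w := by
        intro k
        simp [Polynomial.aeval_mul, Algebra.smul_def]
      calc (∑ k : Fin d, Polynomial.aeval f (Polynomial.C (a k) * Polynomial.X ^ (k : ℕ))) w
          = ∑ k : Fin d, (Polynomial.aeval f (Polynomial.C (a k) * Polynomial.X ^ (k : ℕ))) w := by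
            simp [LinearMap.sum_apply]
        _ = ∑ k : Fin d, a k • (f ^ (k : ℕ)) w := by simp_rw [this]
        _ = 0 := hsum
    have hp0 : p ≠ 0 := by
      intro h
      apply hk
      have := congrArg (fun q => Polynomial.coeff q (k : ℕ)) h
      simpa [hp, Polynomial.finset_sum_coeff, Polynomial.coeff_C_mul,
        Polynomial.coeff_X_pow, Finset.sum_ite_eq', Fin.val_eq_val] using this
    have hdeg : p.natDegree < d := by
      calc p.natDegree ≤ d - 1 := by
            apply Polynomial.natDegree_sum_le_of_forall_le
            intro k _
            refine (Polynomial.natDegree_C_mul_le _ _).trans ?_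
            simpa using Nat.le_sub_one_of_lt k.isLt
        _ < d := by omega
    have hndvd : ¬ M.charpoly ∣ p := fun h => by
      have := Polynomial.natDegree_le_of_dvd h hp0
      omega
    have hcop : IsCoprime M.charpoly p := hirr.coprime_iff_not_dvd.mpr hndvd
    obtain ⟨A, B, hAB⟩ := hcop
    have : w = 0 := by
      have := congrArg (fun q => (Polynomial.aeval f q) w) hAB
      simp only [map_add, map_mul, map_one, LinearMap.add_apply, Module.End.mul_apply,
        Module.End.one_apply] at this
      rw [hchar, hpeval, map_zero, map_zero, add_zero] at this
      exact this.symm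
    exact hw0 this
  -- conclude
  have hle : d ≤ Module.finrank ℚ W := by
    have hLI' : LinearIndependent ℚ (fun k : Fin d => (⟨(f ^ (k : ℕ)) w, hpow k⟩ : W)) := by
      apply LinearIndependent.of_comp W.subtype
      exact hLI
    simpa using hLI'.fintype_card_le_finrank
  have hge : Module.finrank ℚ W ≤ d := by
    simpa using W.finrank_le
  exact Submodule.eq_top_of_finrank_eq (by simpa using le_antisymm hge hle)



/-- Two integer matrices with irreducible characteristic polynomials over `ℚ`,
diagonalizable over a finite Galois extension `K` of `ℚ`, that share a common eigenvector
in `K^d`, must commute. -/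
theorem common_eigenvector_implies_commute
    (d : ℕ) (K : Type*) [Field K] [Algebra ℚ K] [FiniteDimensional ℚ K] [IsGalois ℚ K]
    (S T : Matrix (Fin d) (Fin d) ℤ)
    (hSirr : Irreducible ((S.map (Int.cast : ℤ → ℚ)).charpoly))
    (hTirr : Irreducible ((T.map (Int.cast : ℤ → ℚ)).charpoly))
    (hSdiag : ∃ (P : Matrix (Fin d) (Fin d) K) (g : Fin d → K), IsUnit P.det ∧
      S.map (Int.cast : ℤ → K) = P * Matrix.diagonal g * P⁻¹)
    (hTdiag : ∃ (P : Matrix (Fin d) (Fin d) K) (g : Fin d → K), IsUnit P.det ∧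
      T.map (Int.cast : ℤ → K) = P * Matrix.diagonal g * P⁻¹)
    (v : Fin d → K) (hv : v ≠ 0) (lS lT : K)
    (hvS : (S.map (Int.cast : ℤ → K)).mulVec v = lS • v)
    (hvT : (T.map (Int.cast : ℤ → K)).mulVec v = lT • v) :
    S * T = T * S := by
  classical
  set A := S.map (Int.cast : ℤ → K) with hA
  set B := T.map (Int.cast : ℤ → K) with hB
  -- Galois conjugates of v are common eigenvectors
  have key : ∀ (N : Matrix (Fin d) (Fin d) ℤ) (l : K),
      (N.map (Int.cast : ℤ → K)).mulVec v = l • v →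
      ∀ σ : K ≃ₐ[ℚ] K,
        (N.map (Int.cast : ℤ → K)).mulVec (σ ∘ v) = σ l • (σ ∘ v) := by
    intro N l hl σ
    funext i
    have h0 := congrFun hl i
    simp only [Matrix.mulVec, dotProduct, Matrix.map_apply, Pi.smul_apply,
      smul_eq_mul, Function.comp_apply] at h0 ⊢
    calc ∑ j, ((N i j : K)) * σ (v j)
        = σ (∑ j, (N i j : K) * v j) := by
          rw [map_sum]
          refine Finset.sum_congr rfl fun j _ => ?_
          rw [map_mul, map_intCast]
      _ = σ l * σ (v i) := by rw [h0, map_mul]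
  -- the span of the Galois orbit of v
  set V : Submodule K (Fin d → K) :=
    Submodule.span K (Set.range fun σ : K ≃ₐ[ℚ] K => σ ∘ v) with hV
  have hgen : ∀ σ : K ≃ₐ[ℚ] K, (σ ∘ v) ∈ V :=
    fun σ => Submodule.subset_span ⟨σ, rfl⟩
  have hVA : ∀ x ∈ V, A.mulVec x ∈ V := by
    intro x hx
    induction hx using Submodule.span_induction with
    | mem x hx =>
        obtain ⟨σ, rfl⟩ := hx
        rw [key S lS hvS σ]
        exact Submodule.smul_mem _ _ (hgen σ)
    | zero => simpa [Matrix.mulVec_zero] using V.zero_mem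
    | add x y _ _ hx hy => rw [Matrix.mulVec_add]; exact V.add_mem hx hy
    | smul c x _ hx => rw [Matrix.mulVec_smul]; exact V.smul_mem c hx
  -- the rational points of V
  set L : (Fin d → ℚ) →ₗ[ℚ] (Fin d → K) := (Algebra.linearMap ℚ K).compLeft (Fin d) with hL
  have hLapp : ∀ (w : Fin d → ℚ) (i : Fin d), L w i = algebraMap ℚ K (w i) := fun _ _ => rfl
  set W₀ : Submodule ℚ (Fin d → ℚ) := (V.restrictScalars ℚ).comap L with hW₀
  set Sq := S.map (Int.cast : ℤ → ℚ) with hSq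
  have hcomm : ∀ w : Fin d → ℚ, L (Sq.mulVec w) = A.mulVec (L w) := by
    intro w
    funext i
    simp only [hLapp, Matrix.mulVec, dotProduct, Matrix.map_apply]
    rw [map_sum]
    refine Finset.sum_congr rfl fun j _ => ?_
    rw [map_mul]
    congr 1
    · simp [hSq, hA, Matrix.map_apply, map_intCast]
  have hW₀inv : ∀ w ∈ W₀, Sq.mulVec w ∈ W₀ := by
    intro w hw
    simp only [hW₀, Submodule.mem_comap, Submodule.restrictScalars_mem] at hw ⊢
    rw [hcomm]
    exact hVA _ hw
  -- a nonzero rational vector in V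
  obtain ⟨i, hvi⟩ := Function.ne_iff.mp hv
  set c : K := (v i)⁻¹ with hc
  set w₀ : Fin d → ℚ := fun j => Algebra.trace ℚ K (c * v j) with hw₀
  have hLw₀ : L w₀ = ∑ σ : K ≃ₐ[ℚ] K, σ c • (σ ∘ v) := by
    funext j
    rw [hLapp]
    simp only [hw₀]
    rw [trace_eq_sum_automorphisms]
    simp only [Finset.sum_apply, Pi.smul_apply, Function.comp_apply, smul_eq_mul, map_mul]
  have hw₀W : w₀ ∈ W₀ := by
    simp only [hW₀, Submodule.mem_comap, Submodule.restrictScalars_mem]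
    rw [hLw₀]
    exact Submodule.sum_mem _ fun σ _ => Submodule.smul_mem _ _ (hgen σ)
  have hw₀0 : w₀ ≠ 0 := by
    intro h
    have h1 : Algebra.trace ℚ K (c * v i) = 0 := by
      simpa [hw₀] using congrFun h i
    rw [hc, inv_mul_cancel₀ hvi] at h1
    rw [show (1 : K) = algebraMap ℚ K 1 by simp, Algebra.trace_algebraMap] at h1
    simp only [nsmul_eq_mul, mul_one, Nat.cast_eq_zero] at h1
    exact Module.finrank_pos.ne' h1
  -- W₀ = ⊤ by irreducibility
  have hW₀top : W₀ = ⊤ := inv_submodule_top d Sq hSirr W₀ hW₀inv w₀ hw₀W hw₀0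
  -- hence V = ⊤
  have hVtop : V = ⊤ := by
    rw [Submodule.eq_top_iff']
    intro x
    rw [pi_eq_sum_univ x]
    refine Submodule.sum_mem _ fun j _ => Submodule.smul_mem _ _ ?_
    have hj : (fun j' => if j = j' then (1:ℚ) else 0) ∈ W₀ := hW₀top ▸ Submodule.mem_top
    simp only [hW₀, Submodule.mem_comap, Submodule.restrictScalars_mem] at hj
    have : L (fun j' => if j = j' then (1:ℚ) else 0) = fun j' => if j = j' then (1:K) else 0 := by
      funext j'
      rw [hLapp]
      split <;> simp
    rwa [this] at hj
  -- A and B commute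
  have hABBA : A * B = B * A := by
    have h1 : Matrix.toLinAlgEquiv' (A * B) = Matrix.toLinAlgEquiv' (B * A) := by
      apply LinearMap.ext_on hVtop
      rintro x ⟨σ, rfl⟩
      simp only [Matrix.toLinAlgEquiv'_apply]
      rw [← Matrix.mulVec_mulVec, ← Matrix.mulVec_mulVec]
      rw [key S lS hvS σ, key T lT hvT σ, Matrix.mulVec_smul, Matrix.mulVec_smul,
        key S lS hvS σ, key T lT hvT σ, smul_comm]
    exact Matrix.toLinAlgEquiv'.injective h1
  -- descend to ℤ
  have : (S * T).map (Int.cast : ℤ → K) = (T * S).map (Int.cast : ℤ → K) := by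
    rw [show ((Int.cast : ℤ → K)) = ⇑(Int.castRingHom K) from rfl]
    rw [Matrix.map_mul, Matrix.map_mul]
    exact hABBA
  have hchar : CharZero K := charZero_of_injective_algebraMap (algebraMap ℚ K).injective
  ext i j
  have := congrFun (congrFun this i) j
  simp only [Matrix.map_apply] at this
  exact_mod_cast this
end

section
/- Let S and T be d-by-d matrices over an algebraically closed field, both diagonalizable, with integer entries and totally irreducible (all powers have irreducible characteristic polynomial over ℚ). Let 𝓘 be the collection of nonzero subspaces of (the algebraic closure of ℚ)^d that are simultaneously invariant under S and T, and suppose 𝓘 is nonempty. Let p be the minimal dimension of a member of 𝓘. Then p divides d, and the dimension of every member of 𝓘 is divisible by p. -/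
open Polynomial Module Submodule

local notation "K" => AlgebraicClosure ℚ


/-- A matrix over ℚ with irreducible characteristic polynomial admits no nontrivial
invariant subspace. -/
lemma rat_inv_top {d : ℕ} (M : Matrix (Fin d) (Fin d) ℚ)
    (hirr : Irreducible M.charpoly)
    (U : Submodule ℚ (Fin d → ℚ)) (hinv : ∀ v ∈ U, M.mulVec v ∈ U)
    {q : Fin d → ℚ} (hq : q ∈ U) (hq0 : q ≠ 0) : U = ⊤ := by
  classical
  have hpow : ∀ n : ℕ, (M ^ n).mulVec q ∈ U := by
    intro n
    induction n with
    | zero => simpa [Matrix.one_mulVec] using hq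
    | succ n ih =>
      rw [pow_succ', ← Matrix.mulVec_mulVec]
      exact hinv _ ih
  set J : Ideal (Polynomial ℚ) :=
    { carrier := {f | (Polynomial.aeval M f).mulVec q = 0}
      add_mem' := by
        intro f g hf hg
        simp only [Set.mem_setOf_eq, map_add, Matrix.add_mulVec] at *
        rw [hf, hg, add_zero]
      zero_mem' := by simp [Set.mem_setOf_eq]
      smul_mem' := by
        intro g f hf
        simp only [Set.mem_setOf_eq, smul_eq_mul, map_mul, ← Matrix.mulVec_mulVec] at *
        rw [hf, Matrix.mulVec_zero] } with hJdef
  have hmemJ : ∀ f : Polynomial ℚ, f ∈ J ↔ (Polynomial.aeval M f).mulVec q = 0 := fun f => Iff.rfl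
  have hchar : M.charpoly ∈ J := by
    rw [hmemJ, Matrix.aeval_self_charpoly, Matrix.zero_mulVec]
  -- the ideal is generated by the (irreducible) characteristic polynomial
  have hg := Submodule.IsPrincipal.span_singleton_generator J
  set g := Submodule.IsPrincipal.generator J with hgdef
  have hgdvd : g ∣ M.charpoly := by
    rw [← Ideal.mem_span_singleton]
    show M.charpoly ∈ Submodule.span (Polynomial ℚ) {g}
    rw [hg]; exact hchar
  have hgnu : ¬ IsUnit g := by
    intro hu
    have hJtop : J = ⊤ := by
      rw [← hg]
      exact Ideal.span_singleton_eq_top.mpr hu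
    have : (1 : Polynomial ℚ) ∈ J := hJtop ▸ Submodule.mem_top
    rw [hmemJ, map_one, Matrix.one_mulVec] at this
    exact hq0 this
  have hdvd : ∀ f ∈ J, M.charpoly ∣ f := by
    obtain ⟨c, hc⟩ := hgdvd
    rcases hirr.isUnit_or_isUnit hc with hu | hu
    · exact absurd hu hgnu
    · intro f hf
      have hgf : g ∣ f := by
        rw [← Ideal.mem_span_singleton]
        show f ∈ Submodule.span (Polynomial ℚ) {g}
        rw [hg]; exact hf
      have : Associated g M.charpoly := ⟨hu.unit, by rw [IsUnit.unit_spec, ← hc]⟩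
      exact this.symm.dvd.trans hgf
  have hdeg : ∀ f ∈ J, f ≠ 0 → d ≤ f.natDegree := by
    intro f hf hf0
    have := Polynomial.natDegree_le_of_dvd (hdvd f hf) hf0
    rwa [Matrix.charpoly_natDegree_eq_dim, Fintype.card_fin] at this
  have hli : LinearIndependent ℚ (fun i : Fin d => (M ^ (i : ℕ)).mulVec q) := by
    rw [Fintype.linearIndependent_iff]
    intro c hc
    by_contra hcon
    push_neg at hcon
    obtain ⟨j, hj⟩ := hcon
    have hd0 : 0 < d := Nat.pos_of_ne_zero (by rintro rfl; exact j.elim0)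
    set f : Polynomial ℚ := ∑ i : Fin d, Polynomial.C (c i) * Polynomial.X ^ (i : ℕ) with hfdef
    have hfJ : f ∈ J := by
      rw [hmemJ, hfdef, map_sum]
      have : ∀ i : Fin d, (Polynomial.aeval M (Polynomial.C (c i) * Polynomial.X ^ (i : ℕ))) = c i • M ^ (i : ℕ) := by
        intro i
        simp [Polynomial.aeval_C, Algebra.smul_def]
      rw [Finset.sum_congr rfl fun i _ => this i]
      have hsum : (∑ i : Fin d, c i • M ^ (i : ℕ)).mulVec q = ∑ i : Fin d, c i • (M ^ (i : ℕ)).mulVec q := by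
        funext k
        simp only [Matrix.mulVec, dotProduct, Matrix.sum_apply, Finset.sum_apply,
          Pi.smul_apply, Matrix.smul_apply, smul_eq_mul, Finset.sum_mul, Finset.mul_sum]
        simp only [mul_assoc]
        exact Finset.sum_comm
      rw [hsum, hc]
    have hcoeff : f.coeff (j : ℕ) = c j := by
      rw [hfdef, Polynomial.finset_sum_coeff]
      rw [Finset.sum_eq_single j]
      · simp
      · intro i _ hij
        simp only [Polynomial.coeff_C_mul, Polynomial.coeff_X_pow]
        rw [if_neg (by simpa [Fin.val_eq_val] using Ne.symm hij), mul_zero]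
      · simp
    have hf0 : f ≠ 0 := by
      intro h
      rw [h, Polynomial.coeff_zero] at hcoeff
      exact hj hcoeff.symm
    have h1 := hdeg f hfJ hf0
    have h2 : f.natDegree ≤ d - 1 := by
      rw [hfdef]
      refine Polynomial.natDegree_sum_le_of_forall_le _ _ ?_
      intro i _
      refine (Polynomial.natDegree_mul_le).trans ?_
      simp only [Polynomial.natDegree_C, Polynomial.natDegree_X_pow, zero_add]
      exact Nat.le_sub_one_of_lt i.2
    omega
  have hspanle : Submodule.span ℚ (Set.range fun i : Fin d => (M ^ (i : ℕ)).mulVec q) ≤ U := by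
    rw [Submodule.span_le]
    rintro _ ⟨i, rfl⟩
    exact hpow _
  have h1 : d ≤ finrank ℚ U := by
    have h := finrank_span_eq_card hli
    rw [Fintype.card_fin] at h
    calc d = finrank ℚ (Submodule.span ℚ (Set.range fun i : Fin d => (M ^ (i : ℕ)).mulVec q)) := h.symm
    _ ≤ finrank ℚ U := Submodule.finrank_mono hspanle
  apply Submodule.eq_top_of_finrank_eq
  have h2 := Submodule.finrank_le U
  have h3 : finrank ℚ (Fin d → ℚ) = d := by simp
  omega


/-- An element of the algebraic closure of ℚ fixed by every automorphism is rational. -/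
lemma fixed_is_rat (x : AlgebraicClosure ℚ)
    (hx : ∀ σ : AlgebraicClosure ℚ ≃ₐ[ℚ] AlgebraicClosure ℚ, σ x = x) :
    ∃ q : ℚ, x = (q : AlgebraicClosure ℚ) := by
  classical
  have hint : IsIntegral ℚ x := (AlgebraicClosure.isAlgebraic ℚ).isAlgebraic x |>.isIntegral
  set P := minpoly ℚ x with hP
  set Q := P.map (algebraMap ℚ (AlgebraicClosure ℚ)) with hQ
  have hsplit : Q.Splits := IsAlgClosed.splits Q
  have hcard : P.natDegree = Q.roots.card := by
    rw [← hsplit.natDegree_eq_card_roots, hQ, Polynomial.natDegree_map]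
  have hsep : Q.Separable := ((minpoly.irreducible hint).separable).map
  have hnodup : Q.roots.Nodup := Polynomial.nodup_roots hsep
  have hallx : ∀ y ∈ Q.roots, y = x := by
    intro y hy
    have hy0 : Polynomial.aeval y P = 0 := by
      have h := Polynomial.isRoot_of_mem_roots hy
      rwa [Polynomial.IsRoot, Polynomial.eval_map, ← Polynomial.aeval_def] at h
    have hconj : IsConjRoot ℚ x y := isConjRoot_of_aeval_eq_zero hint hy0
    haveI : Normal ℚ K := @IsAlgClosure.normal ℚ K _ _ _ ⟨inferInstance, AlgebraicClosure.isAlgebraic ℚ⟩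
    obtain ⟨σ, hσ⟩ := hconj.symm.exists_algEquiv
    rw [← hσ, hx σ]
  have hle : Q.roots.card ≤ 1 := by
    have hrep : Q.roots = Multiset.replicate Q.roots.card x :=
      Multiset.eq_replicate_card.mpr hallx
    have h2 := Multiset.nodup_iff_count_le_one.mp hnodup x
    rwa [hrep, Multiset.count_replicate_self] at h2
  have hdeg1 : P.natDegree = 1 := le_antisymm (hcard ▸ hle) (minpoly.natDegree_pos hint)
  obtain ⟨q, hq⟩ := (minpoly.natDegree_eq_one_iff).mp hdeg1
  exact ⟨q, by rw [← hq, eq_ratCast (algebraMap ℚ (AlgebraicClosure ℚ)) q]⟩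



/-- The image of a subspace of `K^d` under coordinatewise application of `σ`,
realized as a preimage under `σ.symm`. -/
noncomputable def conjSub {d : ℕ} (σ : K ≃ₐ[ℚ] K) (W : Submodule K (Fin d → K)) :
    Submodule K (Fin d → K) where
  carrier := {v | (fun i => σ.symm (v i)) ∈ W}
  add_mem' := by
    intro a b ha hb
    have : (fun i => σ.symm ((a + b) i)) = (fun i => σ.symm (a i)) + fun i => σ.symm (b i) := by
      funext i; simp
    show (fun i => σ.symm ((a + b) i)) ∈ W
    rw [this]; exact W.add_mem ha hb
  zero_mem' := by
    show (fun i => σ.symm ((0 : Fin d → K) i)) ∈ W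
    have : (fun i => σ.symm ((0 : Fin d → K) i)) = (0 : Fin d → K) := by funext i; simp
    rw [this]; exact W.zero_mem
  smul_mem' := by
    intro c a ha
    have : (fun i => σ.symm ((c • a) i)) = σ.symm c • fun i => σ.symm (a i) := by
      funext i; simp [map_mul]
    show (fun i => σ.symm ((c • a) i)) ∈ W
    rw [this]; exact W.smul_mem (σ.symm c) ha

lemma mem_conjSub {d : ℕ} {σ : K ≃ₐ[ℚ] K} {W : Submodule K (Fin d → K)} {v : Fin d → K} :
    v ∈ conjSub σ W ↔ (fun i => σ.symm (v i)) ∈ W := Iff.rfl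

lemma apply_mem_conjSub {d : ℕ} {σ : K ≃ₐ[ℚ] K} {W : Submodule K (Fin d → K)} {w : Fin d → K}
    (hw : w ∈ W) : (fun i => σ (w i)) ∈ conjSub σ W := by
  rw [mem_conjSub]
  simpa using hw

lemma conjSub_conjSub {d : ℕ} (σ τ : K ≃ₐ[ℚ] K) (W : Submodule K (Fin d → K)) :
    conjSub τ (conjSub σ W) = conjSub (σ.trans τ) W := by
  ext v
  simp [mem_conjSub]

lemma conjSub_refl {d : ℕ} (W : Submodule K (Fin d → K)) :
    conjSub (AlgEquiv.refl) W = W := by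
  ext v
  simp [mem_conjSub]

lemma conjSub_ne_bot {d : ℕ} (σ : K ≃ₐ[ℚ] K) {W : Submodule K (Fin d → K)} (hW : W ≠ ⊥) :
    conjSub σ W ≠ ⊥ := by
  obtain ⟨w, hwW, hw0⟩ := Submodule.exists_mem_ne_zero_of_ne_bot hW
  rw [Submodule.ne_bot_iff]
  refine ⟨fun i => σ (w i), apply_mem_conjSub hwW, ?_⟩
  intro h
  apply hw0
  funext i
  have := congrFun h i
  simpa using this

lemma conjSub_le_span {d : ℕ} (σ : K ≃ₐ[ℚ] K) (W : Submodule K (Fin d → K)) :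
    conjSub σ W ≤ Submodule.span K (Set.range fun i : Fin (finrank K W) =>
      fun j => σ (((Module.finBasis K W) i : Fin d → K) j)) := by
  classical
  set b : Fin (finrank K W) → (Fin d → K) := fun i => ((Module.finBasis K W) i : Fin d → K) with hb
  have hWspan : W = Submodule.span K (Set.range b) := by
    conv_lhs => rw [← Submodule.map_subtype_top W]
    rw [← Basis.span_eq (Module.finBasis K W), Submodule.map_span, ← Set.range_comp]
    rfl
  intro v hv
  have hw : (fun i => σ.symm (v i)) ∈ W := hv
  have hv' : v = fun j => σ ((fun i => σ.symm (v i)) j) := by funext j; simp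
  rw [hv']
  set w := fun i => σ.symm (v i) with hwdef
  clear_value w
  clear hv hv' hwdef
  rw [hWspan] at hw
  induction hw using Submodule.span_induction with
  | mem x hx =>
    obtain ⟨i, rfl⟩ := hx
    exact Submodule.subset_span ⟨i, rfl⟩
  | zero =>
    have : (fun j => σ ((0 : Fin d → K) j)) = (0 : Fin d → K) := by funext j; simp
    rw [this]; exact Submodule.zero_mem _
  | add x y hx hy ihx ihy =>
    have : (fun j => σ ((x + y) j)) = (fun j => σ (x j)) + fun j => σ (y j) := by
      funext j; simp
    rw [this]; exact Submodule.add_mem _ ihx ihy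
  | smul c x hx ihx =>
    have : (fun j => σ ((c • x) j)) = σ c • fun j => σ (x j) := by
      funext j; simp [map_mul]
    rw [this]; exact Submodule.smul_mem _ _ ihx

lemma finrank_conjSub_le {d : ℕ} (σ : K ≃ₐ[ℚ] K) (W : Submodule K (Fin d → K)) :
    finrank K (conjSub σ W) ≤ finrank K W := by
  refine le_trans (Submodule.finrank_mono (conjSub_le_span σ W)) ?_
  have := finrank_range_le_card (R := K)
    (fun i : Fin (finrank K W) => fun j => σ (((Module.finBasis K W) i : Fin d → K) j))
  rw [Fintype.card_fin] at this
  exact this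

lemma finrank_conjSub {d : ℕ} (σ : K ≃ₐ[ℚ] K) (W : Submodule K (Fin d → K)) :
    finrank K (conjSub σ W) = finrank K W := by
  refine le_antisymm (finrank_conjSub_le σ W) ?_
  have h := finrank_conjSub_le σ.symm (conjSub σ W)
  rw [conjSub_conjSub] at h
  have he : σ.trans σ.symm = AlgEquiv.refl := by ext x; simp
  rwa [he, conjSub_refl] at h

lemma conjSub_invariant {d : ℕ} {A : Matrix (Fin d) (Fin d) ℤ} {W : Submodule K (Fin d → K)}
    (σ : K ≃ₐ[ℚ] K)
    (h : ∀ v ∈ W, (A.map (Int.cast : ℤ → K)).mulVec v ∈ W) :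
    ∀ v ∈ conjSub σ W, (A.map (Int.cast : ℤ → K)).mulVec v ∈ conjSub σ W := by
  intro v hv
  rw [mem_conjSub] at hv ⊢
  have hcomm : (fun i => σ.symm (((A.map (Int.cast : ℤ → K)).mulVec v) i))
      = (A.map (Int.cast : ℤ → K)).mulVec (fun i => σ.symm (v i)) := by
    funext i
    simp [Matrix.mulVec, dotProduct, map_sum, Matrix.map_apply, map_mul]
  rw [hcomm]
  exact h _ hv



/-- A nonzero Galois-stable subspace of `K^d` invariant under a matrix with irreducible
rational characteristic polynomial is everything. -/
lemma descent {d : ℕ} (S : Matrix (Fin d) (Fin d) ℤ)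
    (hirr : Irreducible ((S.map (Int.cast : ℤ → ℚ)).charpoly))
    (W : Submodule K (Fin d → K)) (hne : W ≠ ⊥)
    (hstable : ∀ τ : K ≃ₐ[ℚ] K, ∀ v ∈ W, (fun i => τ (v i)) ∈ W)
    (hinv : ∀ v ∈ W, (S.map (Int.cast : ℤ → K)).mulVec v ∈ W) : W = ⊤ := by
  classical
  -- support-size function
  set Supp : (Fin d → K) → ℕ := fun u => (Finset.univ.filter fun i => u i ≠ 0).card with hSupp
  set 𝒮 : Set ℕ := {n | ∃ u, u ∈ W ∧ u ≠ 0 ∧ Supp u = n} with h𝒮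
  have h𝒮ne : 𝒮.Nonempty := by
    obtain ⟨u, huW, hu0⟩ := Submodule.exists_mem_ne_zero_of_ne_bot hne
    exact ⟨Supp u, u, huW, hu0, rfl⟩
  obtain ⟨u, huW, hu0, huS⟩ : ∃ u, u ∈ W ∧ u ≠ 0 ∧ Supp u = sInf 𝒮 := Nat.sInf_mem h𝒮ne
  obtain ⟨i₀, hi₀⟩ : ∃ i, u i ≠ 0 := by
    by_contra h
    push_neg at h
    exact hu0 (funext h)
  -- normalize
  set v : Fin d → K := (u i₀)⁻¹ • u with hv
  have hvW : v ∈ W := W.smul_mem _ huW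
  have hvi₀ : v i₀ = 1 := by
    rw [hv]; simp [inv_mul_cancel₀ hi₀]
  have hvsupp : ∀ i, v i = 0 ↔ u i = 0 := by
    intro i
    rw [hv]
    simp only [Pi.smul_apply, smul_eq_mul, mul_eq_zero, inv_eq_zero]
    exact ⟨fun h => h.resolve_left hi₀, Or.inr⟩
  have hfeq : (Finset.univ.filter fun i => v i ≠ 0) = (Finset.univ.filter fun i => u i ≠ 0) := by
    ext i
    simp only [Finset.mem_filter, Finset.mem_univ, true_and]
    exact not_congr (hvsupp i)
  have hvS : Supp v = sInf 𝒮 := by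
    rw [← huS]
    show (Finset.univ.filter fun i => v i ≠ 0).card = (Finset.univ.filter fun i => u i ≠ 0).card
    rw [hfeq]
  have hv0 : v ≠ 0 := by
    intro h
    rw [h] at hvi₀
    simpa using hvi₀
  -- Galois-fixedness of v
  have hfix : ∀ (σ : K ≃ₐ[ℚ] K) (i : Fin d), σ (v i) = v i := by
    intro σ
    set w : Fin d → K := (fun i => σ (v i)) - v with hw
    have hwW : w ∈ W := W.sub_mem (hstable σ v hvW) hvW
    have hw0 : w = 0 := by
      by_contra hw0
      have hmem : Supp w ∈ 𝒮 := ⟨w, hwW, hw0, rfl⟩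
      have hge := Nat.sInf_le hmem
      -- but Supp w < sInf 𝒮
      have hsub : (Finset.univ.filter fun i => w i ≠ 0) ⊆
          (Finset.univ.filter fun i => v i ≠ 0).erase i₀ := by
        intro i hi
        rw [Finset.mem_filter] at hi
        rw [Finset.mem_erase, Finset.mem_filter]
        constructor
        · intro h
          apply hi.2
          rw [hw]
          simp [h, hvi₀]
        · refine ⟨Finset.mem_univ i, ?_⟩
          intro h
          apply hi.2
          rw [hw]
          simp [h]
      have hmemv : i₀ ∈ Finset.univ.filter fun i => v i ≠ 0 := by
        simp [hvi₀]
      have hlt : Supp w < Supp v := by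
        calc Supp w ≤ ((Finset.univ.filter fun i => v i ≠ 0).erase i₀).card :=
              Finset.card_le_card hsub
        _ < (Finset.univ.filter fun i => v i ≠ 0).card := Finset.card_erase_lt_of_mem hmemv
        _ = Supp v := rfl
      omega
    intro i
    have := congrFun hw0 i
    rw [hw] at this
    simpa [sub_eq_zero] using this
  -- rationality
  have hrat : ∀ i, ∃ q : ℚ, v i = (q : K) := fun i => fixed_is_rat (v i) (fun σ => hfix σ i)
  choose q hq using hrat
  -- the rational trace of W
  set Uℚ : Submodule ℚ (Fin d → ℚ) :=
    { carrier := {x | (fun i => ((x i : ℚ) : K)) ∈ W}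
      add_mem' := by
        intro a b ha hb
        have : (fun i => (((a + b) i : ℚ) : K)) =
            (fun i => ((a i : ℚ) : K)) + fun i => ((b i : ℚ) : K) := by
          funext i; simp [Pi.add_apply, Rat.cast_add]
        simp only [Set.mem_setOf_eq] at *
        rw [this]; exact W.add_mem ha hb
      zero_mem' := by
        show (fun i => (((0 : Fin d → ℚ) i : ℚ) : K)) ∈ W
        have : (fun i => (((0 : Fin d → ℚ) i : ℚ) : K)) = (0 : Fin d → K) := by
          funext i; simp
        rw [this]; exact W.zero_mem
      smul_mem' := by
        intro c a ha
        simp only [Set.mem_setOf_eq] at *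
        have : (fun i => (((c • a) i : ℚ) : K)) = ((c : K)) • fun i => ((a i : ℚ) : K) := by
          funext i; simp [Pi.smul_apply, smul_eq_mul, Rat.cast_mul]
        rw [this]; exact W.smul_mem _ ha } with hUℚ
  have hUmem : ∀ x : Fin d → ℚ, x ∈ Uℚ ↔ (fun i => ((x i : ℚ) : K)) ∈ W := fun x => Iff.rfl
  have hUinv : ∀ x ∈ Uℚ, (S.map (Int.cast : ℤ → ℚ)).mulVec x ∈ Uℚ := by
    intro x hx
    rw [hUmem] at hx ⊢
    have hcast : (fun i => ((((S.map (Int.cast : ℤ → ℚ)).mulVec x) i : ℚ) : K))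
        = (S.map (Int.cast : ℤ → K)).mulVec (fun i => ((x i : ℚ) : K)) := by
      funext i
      simp only [Matrix.mulVec, dotProduct, Matrix.map_apply]
      push_cast
      rfl
    rw [hcast]
    exact hinv _ hx
  have hqU : q ∈ Uℚ := by
    rw [hUmem]
    have : (fun i => ((q i : ℚ) : K)) = v := by funext i; rw [← hq i]
    rw [this]; exact hvW
  have hq0 : q ≠ 0 := by
    intro h
    apply hv0
    funext i
    rw [hq i, h]
    simp
  have hUtop : Uℚ = ⊤ := rat_inv_top _ hirr _ hUinv hqU hq0
  -- conclude
  rw [eq_top_iff']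
  intro x
  rw [pi_eq_sum_univ x]
  refine Submodule.sum_mem _ fun i _ => Submodule.smul_mem _ _ ?_
  have hei : (fun j => if i = j then (1 : ℚ) else 0) ∈ Uℚ := hUtop ▸ Submodule.mem_top
  rw [hUmem] at hei
  have : (fun j => (((if i = j then (1:ℚ) else 0) : ℚ) : K)) =
      (fun j => if i = j then (1:K) else 0) := by
    funext j; split_ifs <;> simp
  rwa [this] at hei



/-- Invariance passes to sups. -/
lemma sup_inv {d : ℕ} {A : Matrix (Fin d) (Fin d) K} {U X : Submodule K (Fin d → K)}
    (hU : ∀ v ∈ U, A.mulVec v ∈ U) (hX : ∀ v ∈ X, A.mulVec v ∈ X) :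
    ∀ v ∈ U ⊔ X, A.mulVec v ∈ U ⊔ X := by
  intro v hv
  rw [Submodule.mem_sup] at hv ⊢
  obtain ⟨a, ha, b, hb, rfl⟩ := hv
  exact ⟨A.mulVec a, hU a ha, A.mulVec b, hX b hb, (Matrix.mulVec_add A a b).symm⟩

/-- Invariance passes to infs. -/
lemma inf_inv {d : ℕ} {A : Matrix (Fin d) (Fin d) K} {U X : Submodule K (Fin d → K)}
    (hU : ∀ v ∈ U, A.mulVec v ∈ U) (hX : ∀ v ∈ X, A.mulVec v ∈ X) :
    ∀ v ∈ U ⊓ X, A.mulVec v ∈ U ⊓ X := fun v hv =>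
  ⟨hU v hv.1, hX v hv.2⟩

/-- The Galois closure of `W₀` is Galois-stable. -/
lemma iSup_conj_stable {d : ℕ} (W₀ : Submodule K (Fin d → K)) (τ : K ≃ₐ[ℚ] K) :
    ∀ v ∈ (⨆ σ : K ≃ₐ[ℚ] K, conjSub σ W₀),
      (fun i => τ (v i)) ∈ ⨆ σ : K ≃ₐ[ℚ] K, conjSub σ W₀ := by
  intro v hv
  refine Submodule.iSup_induction (x := v)
    (motive := fun x => (fun i => τ (x i)) ∈ ⨆ σ : K ≃ₐ[ℚ] K, conjSub σ W₀) _ hv ?_ ?_ ?_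
  · intro σ x hx
    show (fun i => τ (x i)) ∈ ⨆ σ : K ≃ₐ[ℚ] K, conjSub σ W₀
    refine Submodule.mem_iSup_of_mem (σ.trans τ) ?_
    rw [mem_conjSub] at hx ⊢
    have : (fun i => (σ.trans τ).symm (τ (x i))) = fun i => σ.symm (x i) := by
      funext i; simp
    rw [this]; exact hx
  · show (fun i => τ ((0 : Fin d → K) i)) ∈ ⨆ σ : K ≃ₐ[ℚ] K, conjSub σ W₀
    have : (fun i => τ ((0 : Fin d → K) i)) = (0 : Fin d → K) := by funext i; simp
    rw [this]; exact Submodule.zero_mem _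
  · intro x y hx hy
    show (fun i => τ ((x + y) i)) ∈ ⨆ σ : K ≃ₐ[ℚ] K, conjSub σ W₀
    have : (fun i => τ ((x + y) i)) = (fun i => τ (x i)) + fun i => τ (y i) := by
      funext i; simp
    rw [this]; exact Submodule.add_mem _ hx hy

/-- The Galois closure of `W₀` is invariant under integer matrices preserving `W₀`. -/
lemma iSup_conj_inv {d : ℕ} (A : Matrix (Fin d) (Fin d) ℤ) (W₀ : Submodule K (Fin d → K))
    (h : ∀ v ∈ W₀, (A.map (Int.cast : ℤ → K)).mulVec v ∈ W₀) :
    ∀ v ∈ (⨆ σ : K ≃ₐ[ℚ] K, conjSub σ W₀),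
      (A.map (Int.cast : ℤ → K)).mulVec v ∈ ⨆ σ : K ≃ₐ[ℚ] K, conjSub σ W₀ := by
  intro v hv
  refine Submodule.iSup_induction (x := v)
    (motive := fun x => (A.map (Int.cast : ℤ → K)).mulVec x ∈ ⨆ σ : K ≃ₐ[ℚ] K, conjSub σ W₀)
    _ hv ?_ ?_ ?_
  · intro σ x hx
    exact Submodule.mem_iSup_of_mem σ (conjSub_invariant σ h x hx)
  · show (A.map (Int.cast : ℤ → K)).mulVec 0 ∈ ⨆ σ : K ≃ₐ[ℚ] K, conjSub σ W₀
    rw [Matrix.mulVec_zero]; exact Submodule.zero_mem _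
  · intro x y hx hy
    show (A.map (Int.cast : ℤ → K)).mulVec (x + y) ∈ ⨆ σ : K ≃ₐ[ℚ] K, conjSub σ W₀
    rw [Matrix.mulVec_add]; exact Submodule.add_mem _ hx hy

/-- For two totally irreducible, diagonalizable integer matrices `S, T`,
the minimal dimension `p` of a nonzero common invariant subspace of `(ℚ̄)^d` divides `d`,
and divides the dimension of every common invariant subspace. -/
theorem common_invariant_subspace_dimension_divisibility
    (d : ℕ) (S T : Matrix (Fin d) (Fin d) ℤ)
    (hSirr : ∀ n : ℕ, 0 < n → Irreducible (((S ^ n).map (Int.cast : ℤ → ℚ)).charpoly))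
    (hTirr : ∀ n : ℕ, 0 < n → Irreducible (((T ^ n).map (Int.cast : ℤ → ℚ)).charpoly))
    (hSdiag : ∃ (P : Matrix (Fin d) (Fin d) (AlgebraicClosure ℚ)) (g : Fin d → AlgebraicClosure ℚ),
      IsUnit P.det ∧ S.map (Int.cast : ℤ → AlgebraicClosure ℚ) = P * Matrix.diagonal g * P⁻¹)
    (hTdiag : ∃ (P : Matrix (Fin d) (Fin d) (AlgebraicClosure ℚ)) (g : Fin d → AlgebraicClosure ℚ),
      IsUnit P.det ∧ T.map (Int.cast : ℤ → AlgebraicClosure ℚ) = P * Matrix.diagonal g * P⁻¹)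
    (I : Set (Submodule (AlgebraicClosure ℚ) (Fin d → AlgebraicClosure ℚ)))
    (hI : I = {W | W ≠ ⊥ ∧
      (∀ v ∈ W, (S.map (Int.cast : ℤ → AlgebraicClosure ℚ)).mulVec v ∈ W) ∧
      (∀ v ∈ W, (T.map (Int.cast : ℤ → AlgebraicClosure ℚ)).mulVec v ∈ W)})
    (p : ℕ) (W₀ : Submodule (AlgebraicClosure ℚ) (Fin d → AlgebraicClosure ℚ))
    (hW₀ : W₀ ∈ I) (hp : Module.finrank (AlgebraicClosure ℚ) W₀ = p)
    (hmin : ∀ W ∈ I, p ≤ Module.finrank (AlgebraicClosure ℚ) W) :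
    p ∣ d ∧ ∀ W ∈ I, p ∣ Module.finrank (AlgebraicClosure ℚ) W := by
  classical
  subst hI
  obtain ⟨hW₀ne, hW₀S, hW₀T⟩ := hW₀
  have hSQirr : Irreducible ((S.map (Int.cast : ℤ → ℚ)).charpoly) := by
    have := hSirr 1 one_pos
    rwa [pow_one] at this
  -- the Galois closure of W₀ is everything
  have htop : (⨆ σ : K ≃ₐ[ℚ] K, conjSub σ W₀) = ⊤ := by
    refine descent S hSQirr _ ?_ (iSup_conj_stable W₀) (iSup_conj_inv S W₀ hW₀S)
    intro h
    apply conjSub_ne_bot (AlgEquiv.refl (A₁ := K)) hW₀ne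
    rw [← le_bot_iff, ← h]
    exact le_iSup (fun σ : K ≃ₐ[ℚ] K => conjSub σ W₀) AlgEquiv.refl
  -- a finite set of conjugates suffices
  obtain ⟨F, hF⟩ : ∃ F : Finset (K ≃ₐ[ℚ] K),
      (⨆ σ ∈ F, conjSub σ W₀) = ⊤ := by
    have he : ∀ i : Fin d, ∃ F : Finset (K ≃ₐ[ℚ] K),
        (fun j => if i = j then (1:K) else 0) ∈ ⨆ σ ∈ F, conjSub σ W₀ := by
      intro i
      have : (fun j => if i = j then (1:K) else 0) ∈ ⨆ σ : K ≃ₐ[ℚ] K, conjSub σ W₀ := by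
        rw [htop]; exact Submodule.mem_top
      exact Submodule.mem_iSup_iff_exists_finset.mp this
    choose Fi hFi using he
    refine ⟨Finset.univ.biUnion Fi, ?_⟩
    rw [eq_top_iff']
    intro x
    rw [pi_eq_sum_univ x]
    refine Submodule.sum_mem _ fun i _ => Submodule.smul_mem _ _ ?_
    exact biSup_mono (f := fun σ : K ≃ₐ[ℚ] K => conjSub σ W₀)
      (fun σ hσ => Finset.mem_biUnion.mpr ⟨i, Finset.mem_univ i, hσ⟩) (hFi i)
  -- the counting argument
  have key : ∀ (F' : Finset (K ≃ₐ[ℚ] K)) (U : Submodule K (Fin d → K)),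
      (∀ v ∈ U, (S.map (Int.cast : ℤ → K)).mulVec v ∈ U) →
      (∀ v ∈ U, (T.map (Int.cast : ℤ → K)).mulVec v ∈ U) →
      (∀ v ∈ (U ⊔ ⨆ σ ∈ F', conjSub σ W₀),
        (S.map (Int.cast : ℤ → K)).mulVec v ∈ (U ⊔ ⨆ σ ∈ F', conjSub σ W₀)) ∧
      (∀ v ∈ (U ⊔ ⨆ σ ∈ F', conjSub σ W₀),
        (T.map (Int.cast : ℤ → K)).mulVec v ∈ (U ⊔ ⨆ σ ∈ F', conjSub σ W₀)) ∧
      ∃ k, finrank K ↥(U ⊔ ⨆ σ ∈ F', conjSub σ W₀) = finrank K U + k * p := by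
    intro F'
    induction F' using Finset.induction_on with
    | empty =>
      intro U hUS hUT
      have hbot : (⨆ σ ∈ (∅ : Finset (K ≃ₐ[ℚ] K)), conjSub σ W₀)
          = (⊥ : Submodule K (Fin d → K)) := by simp
      rw [hbot, sup_bot_eq]
      exact ⟨hUS, hUT, 0, by ring⟩
    | @insert σ F' hσF ih =>
      intro U hUS hUT
      obtain ⟨ihS, ihT, k, hk⟩ := ih U hUS hUT
      have hXS := conjSub_invariant σ hW₀S
      have hXT := conjSub_invariant σ hW₀T
      have hXrank : finrank K ↥(conjSub σ W₀) = p := by rw [finrank_conjSub, hp]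
      have hrearr : (U ⊔ ⨆ σ' ∈ insert σ F', conjSub σ' W₀)
          = (U ⊔ ⨆ σ' ∈ F', conjSub σ' W₀) ⊔ conjSub σ W₀ := by
        rw [Finset.iSup_insert, sup_comm (conjSub σ W₀) (⨆ σ' ∈ F', conjSub σ' W₀),
          ← sup_assoc]
      rw [hrearr]
      refine ⟨sup_inv ihS hXS, sup_inv ihT hXT, ?_⟩
      by_cases hbot : (U ⊔ ⨆ σ' ∈ F', conjSub σ' W₀) ⊓ conjSub σ W₀ = ⊥
      · refine ⟨k + 1, ?_⟩
        have hsum := Submodule.finrank_sup_add_finrank_inf_eq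
          (U ⊔ ⨆ σ' ∈ F', conjSub σ' W₀) (conjSub σ W₀)
        rw [hbot, finrank_bot] at hsum
        have hmul : (k + 1) * p = k * p + p := by ring
        rw [hmul]
        omega
      · have hmemI : ((U ⊔ ⨆ σ' ∈ F', conjSub σ' W₀) ⊓ conjSub σ W₀) ∈
            {W : Submodule K (Fin d → K) | W ≠ ⊥ ∧
              (∀ v ∈ W, (S.map (Int.cast : ℤ → K)).mulVec v ∈ W) ∧
              (∀ v ∈ W, (T.map (Int.cast : ℤ → K)).mulVec v ∈ W)} :=
          ⟨hbot, inf_inv ihS hXS, inf_inv ihT hXT⟩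
        have hple := hmin _ hmemI
        have hle2 : finrank K ↥((U ⊔ ⨆ σ' ∈ F', conjSub σ' W₀) ⊓ conjSub σ W₀)
            ≤ finrank K ↥(conjSub σ W₀) := Submodule.finrank_mono inf_le_right
        have heq : (U ⊔ ⨆ σ' ∈ F', conjSub σ' W₀) ⊓ conjSub σ W₀ = conjSub σ W₀ :=
          Submodule.eq_of_le_of_finrank_le inf_le_right (by omega)
        have hle3 : conjSub σ W₀ ≤ U ⊔ ⨆ σ' ∈ F', conjSub σ' W₀ := by
          rw [← heq]; exact inf_le_left
        rw [sup_eq_left.mpr hle3]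
        exact ⟨k, hk⟩
  -- conclusion
  have hbotS : ∀ v ∈ (⊥ : Submodule K (Fin d → K)),
      (S.map (Int.cast : ℤ → K)).mulVec v ∈ (⊥ : Submodule K (Fin d → K)) := by
    intro v hv
    rw [Submodule.mem_bot] at hv ⊢
    rw [hv, Matrix.mulVec_zero]
  have hbotT : ∀ v ∈ (⊥ : Submodule K (Fin d → K)),
      (T.map (Int.cast : ℤ → K)).mulVec v ∈ (⊥ : Submodule K (Fin d → K)) := by
    intro v hv
    rw [Submodule.mem_bot] at hv ⊢
    rw [hv, Matrix.mulVec_zero]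
  obtain ⟨-, -, k, hk⟩ := key F ⊥ hbotS hbotT
  rw [hF, sup_top_eq, finrank_bot, finrank_top, zero_add] at hk
  have hfrk : finrank K (Fin d → K) = d := by simp
  have hdvd : p ∣ d := ⟨k, by rw [← hfrk, hk, mul_comm]⟩
  refine ⟨hdvd, ?_⟩
  intro W hW
  obtain ⟨hWne, hWS, hWT⟩ := hW
  obtain ⟨-, -, k', hk'⟩ := key F W hWS hWT
  rw [hF, sup_top_eq, finrank_top, hfrk] at hk'
  have h1 : finrank K W = d - k' * p := by omega
  rw [h1]
  exact Nat.dvd_sub hdvd (dvd_mul_left p k')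
end

section
/- Let M₁ and M₂ be Riemannian manifolds, A ⊆ M₁, and B ⊆ M₁ × M₂. For a ∈ M₁ let B_a = B ∩ ({a} × M₂), and assume B_a is nonempty for all a ∈ A. Then dim_H(B) ≥ dim_H(A) + inf_{a ∈ A} dim_H(B_a), where dim_H denotes Hausdorff dimension. -/
open MeasureTheory EMetric Set
open scoped ENNReal NNReal Classical

noncomputable def slHc {X : Type*} [EMetricSpace X] (d : ℝ) (A : Set X) : ℝ≥0∞ :=
  ⨅ (E : ℕ → Set X) (_ : A ⊆ ⋃ i, E i), ∑' i, EMetric.diam (E i) ^ d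

section slHc
variable {X : Type*} [EMetricSpace X]

lemma slHc_le_of_cover {ι : Type*} [Encodable ι] {d : ℝ} (hd : 0 < d) (A : Set X)
    (E : ι → Set X) (hE : A ⊆ ⋃ i, E i) : slHc d A ≤ ∑' i, EMetric.diam (E i) ^ d := by
  classical
  set F : ℕ → Set X := fun n => ⋃ b ∈ Encodable.decode₂ ι n, E b with hF
  have hcov : A ⊆ ⋃ n, F n := by
    rw [hF, Encodable.iUnion_decode₂]; exact hE
  have hsum : ∑' n, EMetric.diam (F n) ^ d = ∑' i, EMetric.diam (E i) ^ d := by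
    refine tsum_iUnion_decode₂ (fun t : Set X => EMetric.diam t ^ d) ?_ E
    simp [EMetric.diam, ENNReal.zero_rpow_of_pos hd]
  calc slHc d A ≤ ∑' n, EMetric.diam (F n) ^ d := iInf₂_le F hcov
    _ = _ := hsum

lemma slHc_lt_iff {d : ℝ} {A : Set X} {b : ℝ≥0∞} :
    slHc d A < b ↔ ∃ E : ℕ → Set X, A ⊆ ⋃ i, E i ∧ ∑' i, EMetric.diam (E i) ^ d < b := by
  simp [slHc, iInf_lt_iff]

lemma slHc_pos [MeasurableSpace X] [BorelSpace X] {d : ℝ} (hd : 0 < d) {A : Set X}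
    (h : μH[d] A ≠ 0) : 0 < slHc d A := by
  rw [pos_iff_ne_zero]
  intro h0
  apply h
  rw [Measure.hausdorffMeasure_apply]
  refine le_antisymm (iSup₂_le fun r hr => ?_) zero_le
  refine ENNReal.le_of_forall_pos_le_add fun ε hε _ => ?_
  rw [zero_add]
  set b : ℝ≥0∞ := if r = ∞ then (ε : ℝ≥0∞) else min (ε : ℝ≥0∞) (r ^ d) with hb
  have hbpos : 0 < b := by
    rw [hb]
    split_ifs with hr'
    · exact ENNReal.coe_pos.2 hε
    · exact lt_min (ENNReal.coe_pos.2 hε) (ENNReal.rpow_pos hr hr')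
  obtain ⟨E, hcov, hsum⟩ := slHc_lt_iff.mp (h0 ▸ hbpos)
  have hdiam : ∀ n, EMetric.diam (E n) ≤ r := by
    intro n
    rcases eq_or_ne r ∞ with hr' | hr'
    · simp [hr']
    · by_contra hlt
      push_neg at hlt
      have h1 : r ^ d ≤ EMetric.diam (E n) ^ d := ENNReal.rpow_le_rpow hlt.le hd.le
      have h2 : EMetric.diam (E n) ^ d ≤ ∑' i, EMetric.diam (E i) ^ d := ENNReal.le_tsum n
      have : r ^ d < r ^ d := lt_of_le_of_lt (h1.trans h2) (lt_of_lt_of_le hsum (by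
        rw [hb, if_neg hr']; exact min_le_right _ _))
      exact lt_irrefl _ this
  have hfin : (∑' n, ⨆ _ : (E n).Nonempty, EMetric.diam (E n) ^ d) ≤ (ε : ℝ≥0∞) := by
    have h1 : (∑' n, ⨆ _ : (E n).Nonempty, EMetric.diam (E n) ^ d)
        ≤ ∑' i, EMetric.diam (E i) ^ d :=
      ENNReal.tsum_le_tsum fun n => iSup_le fun _ => le_rfl
    refine h1.trans ?_
    refine le_trans hsum.le ?_
    rw [hb]; split_ifs with hr2
    · exact le_rfl
    · exact min_le_left _ _
  refine le_trans ?_ hfin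
  refine iInf_le_of_le E ?_
  refine iInf_le_of_le hcov ?_
  exact iInf_le _ hdiam

end slHc

/-- index of the dyadic cube of generation `j` containing `x`. -/
noncomputable def cubeIdx (m j : ℕ) (x : Fin m → ℝ) : Fin m → ℤ := fun c => ⌊x c * 2 ^ j⌋

lemma ofReal_half_pow (j : ℕ) : (2⁻¹ : ℝ≥0∞) ^ j = ENNReal.ofReal ((2⁻¹ : ℝ) ^ j) := by
  rw [ENNReal.ofReal_pow (by norm_num), ENNReal.ofReal_inv_of_pos (by norm_num),
    ENNReal.ofReal_ofNat]

lemma abs_sub_le_of_cubeIdx_eq {m j : ℕ} {x y : Fin m → ℝ} (h : cubeIdx m j x = cubeIdx m j y)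
    (c : Fin m) : |x c - y c| ≤ (2⁻¹ : ℝ) ^ j := by
  have hc : ⌊x c * 2 ^ j⌋ = ⌊y c * 2 ^ j⌋ := congrFun h c
  have habs := (Int.abs_sub_lt_one_of_floor_eq_floor hc).le
  have h2 : (0:ℝ) < 2 ^ j := by positivity
  rw [show x c * 2 ^ j - y c * 2 ^ j = (x c - y c) * 2 ^ j by ring, abs_mul,
    abs_of_pos h2] at habs
  rw [inv_pow]
  calc |x c - y c| = |x c - y c| * 2 ^ j / 2 ^ j := by field_simp
    _ ≤ 1 / 2 ^ j := by gcongr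
    _ = (2 ^ j : ℝ)⁻¹ := one_div _

lemma cube_diam (m j : ℕ) (v : Fin m → ℤ) :
    EMetric.diam {x : Fin m → ℝ | cubeIdx m j x = v} ≤ (2⁻¹ : ℝ≥0∞) ^ j := by
  refine EMetric.diam_le fun x hx y hy => ?_
  rw [edist_pi_le_iff]
  intro c
  rw [edist_dist, Real.dist_eq, ofReal_half_pow]
  exact ENNReal.ofReal_le_ofReal
    (abs_sub_le_of_cubeIdx_eq (hx.trans hy.symm : cubeIdx m j x = cubeIdx m j y) c)

lemma cube_card {m j : ℕ} (G : Set (Fin m → ℝ)) (h : EMetric.diam G ≤ (2⁻¹ : ℝ≥0∞) ^ j) :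
    ∃ T : Finset (Fin m → ℤ), T.card ≤ 3 ^ m ∧ ∀ x ∈ G, cubeIdx m j x ∈ T := by
  rcases G.eq_empty_or_nonempty with hG | ⟨x₀, hx₀⟩
  · exact ⟨∅, by simp, by simp [hG]⟩
  set w := cubeIdx m j x₀ with hw
  refine ⟨Fintype.piFinset fun c => ({w c - 1, w c, w c + 1} : Finset ℤ), ?_, ?_⟩
  · calc (Fintype.piFinset fun c => ({w c - 1, w c, w c + 1} : Finset ℤ)).card
        = ∏ c, ({w c - 1, w c, w c + 1} : Finset ℤ).card := Fintype.card_piFinset _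
      _ ≤ ∏ _c : Fin m, 3 := Finset.prod_le_prod (fun _ _ => Nat.zero_le _) (fun c _ => by
          calc ({w c - 1, w c, w c + 1} : Finset ℤ).card
              ≤ ({w c, w c + 1} : Finset ℤ).card + 1 := Finset.card_insert_le _ _
            _ ≤ ({w c + 1} : Finset ℤ).card + 1 + 1 :=
                Nat.add_le_add_right (Finset.card_insert_le _ _) 1
            _ = 3 := by simp)
      _ = 3 ^ m := by simp
  · intro x hx
    have hed : edist x x₀ ≤ (2⁻¹ : ℝ≥0∞) ^ j := le_trans (edist_le_diam_of_mem hx hx₀) h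
    rw [edist_pi_le_iff] at hed
    rw [Fintype.mem_piFinset]
    intro c
    have hc : |x c - x₀ c| ≤ (2⁻¹:ℝ)^j := by
      have := hed c
      rwa [edist_dist, Real.dist_eq, ofReal_half_pow,
        ENNReal.ofReal_le_ofReal_iff (by positivity)] at this
    have h2j : (0:ℝ) < 2^j := by positivity
    have key : (2⁻¹:ℝ)^j * 2^j = 1 := by
      rw [← mul_pow]; norm_num
    rw [abs_sub_le_iff] at hc
    have e1 := mul_le_mul_of_nonneg_right hc.1 h2j.le
    have e2 := mul_le_mul_of_nonneg_right hc.2 h2j.le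
    rw [key] at e1 e2
    have hb1 : x₀ c * 2 ^ j - 1 ≤ x c * 2 ^ j := by nlinarith
    have hb2 : x c * 2 ^ j ≤ x₀ c * 2 ^ j + 1 := by nlinarith
    have h1 : w c - 1 ≤ cubeIdx m j x c := by
      have := Int.floor_mono hb1
      rwa [Int.floor_sub_one] at this
    have h2' : cubeIdx m j x c ≤ w c + 1 := by
      have := Int.floor_mono hb2
      rwa [Int.floor_add_one] at this
    simp only [Finset.mem_insert, Finset.mem_singleton]
    omega

-- assume previous parts; test helper lemmas about `e`
noncomputable def e2 (r : ℝ) : ℝ≥0∞ := (2 : ℝ≥0∞) ^ r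

lemma e2_mul (a b : ℝ) : e2 a * e2 b = e2 (a + b) :=
  (ENNReal.rpow_add a b two_ne_zero ENNReal.ofNat_ne_top).symm

lemma e2_ne_top (r : ℝ) : e2 r ≠ ∞ := by
  rcases le_or_gt 0 r with h | h
  · exact (ENNReal.rpow_lt_top_of_nonneg h ENNReal.ofNat_ne_top).ne
  · rw [e2, ← neg_neg r, ENNReal.rpow_neg]
    simp only [ne_eq, ENNReal.inv_eq_top]
    exact (ENNReal.rpow_pos (by norm_num) ENNReal.ofNat_ne_top).ne'

lemma e2_ne_zero (r : ℝ) : e2 r ≠ 0 :=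
  (ENNReal.rpow_pos (by norm_num) ENNReal.ofNat_ne_top).ne'

lemma e2_inv (r : ℝ) : (e2 r)⁻¹ = e2 (-r) := by
  rw [e2, e2, ENNReal.rpow_neg]

lemma e2_pow (a : ℝ) (k : ℕ) : (e2 a) ^ k = e2 (a * k) := by
  rw [e2, e2, ← ENNReal.rpow_natCast ((2:ℝ≥0∞) ^ a) k, ← ENNReal.rpow_mul]

lemma e2_rpow (a b : ℝ) : (e2 a) ^ b = e2 (a * b) := by
  rw [e2, e2, ← ENNReal.rpow_mul]

lemma half_pow_e2 (k : ℕ) : (2⁻¹ : ℝ≥0∞) ^ k = e2 (-(k:ℝ)) := by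
  rw [← ENNReal.inv_pow, ← ENNReal.rpow_natCast, ← ENNReal.rpow_neg, e2]

lemma e2_lt_one {r : ℝ} (h : r < 0) : e2 r < 1 :=
  ENNReal.rpow_lt_one_of_one_lt_of_neg ENNReal.one_lt_two h

-- level existence
lemma exists_level {d : ℝ≥0∞} (h0 : d ≠ 0) (h1 : d ≤ 1) :
    ∃ j : ℕ, (2⁻¹ : ℝ≥0∞) ^ (j + 1) < d ∧ d ≤ 2⁻¹ ^ j := by
  obtain ⟨n, hn⟩ := ENNReal.exists_inv_two_pow_lt h0
  have hex : ∃ k, (2⁻¹ : ℝ≥0∞) ^ k < d := ⟨n, hn⟩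
  classical
  set n₀ := Nat.find hex with hn₀
  have hP : (2⁻¹ : ℝ≥0∞) ^ n₀ < d := Nat.find_spec hex
  have hn₀0 : n₀ ≠ 0 := by
    intro h
    rw [h, pow_zero] at hP
    exact absurd h1 (not_le.2 hP)
  refine ⟨n₀ - 1, ?_, ?_⟩
  · have he : n₀ - 1 + 1 = n₀ := by omega
    rwa [he]
  · have := Nat.find_min hex (m := n₀ - 1) (by omega)
    exact not_lt.mp this

lemma level_unique {d : ℝ≥0∞} {j j' : ℕ}
    (h : (2⁻¹ : ℝ≥0∞) ^ (j + 1) < d ∧ d ≤ 2⁻¹ ^ j)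
    (h' : (2⁻¹ : ℝ≥0∞) ^ (j' + 1) < d ∧ d ≤ 2⁻¹ ^ j') : j = j' := by
  by_contra hne
  have hmono : ∀ a b : ℕ, a ≤ b → (2⁻¹ : ℝ≥0∞) ^ b ≤ 2⁻¹ ^ a := fun a b hab =>
    pow_le_pow_of_le_one zero_le (by norm_num) hab
  rcases Nat.lt_or_ge j j' with hlt | hge
  · exact absurd ((h'.2.trans (hmono _ _ hlt)).trans_lt h.1).false (by simp)
  · have : j' < j := lt_of_le_of_ne hge (Ne.symm hne)
    exact absurd ((h.2.trans (hmono _ _ this)).trans_lt h'.1).false (by simp)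

lemma slice_diam {α β : Type*} [EMetricSpace α] [EMetricSpace β] (a : α) (E : Set (α × β)) :
    EMetric.diam {y : β | (a, y) ∈ E} ≤ EMetric.diam E := by
  refine EMetric.diam_le fun y hy y' hy' => ?_
  have : edist y y' ≤ edist ((a, y) : α × β) (a, y') := by
    rw [Prod.edist_eq]; exact le_max_right _ _
  exact this.trans (edist_le_diam_of_mem hy hy')

lemma inner_count (m n j : ℕ) (τ : ℝ≥0) (hτ : 0 < τ)
    (Ei : Set ((Fin m → ℝ) × (Fin n → ℝ)))
    (hEi : EMetric.diam Ei ≤ (2⁻¹ : ℝ≥0∞) ^ j) (img : Set (Fin m → ℤ))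
    (aOf : (Fin m → ℤ) → Fin m → ℝ) (haOf : ∀ v ∈ img, cubeIdx m j (aOf v) = v) :
    ∑' v : Fin m → ℤ, (if v ∈ img then EMetric.diam {y | (aOf v, y) ∈ Ei} ^ (τ:ℝ) else 0)
      ≤ (3 ^ m : ℝ≥0∞) * EMetric.diam Ei ^ (τ:ℝ) := by
  classical
  have hτ0 : (0:ℝ) < τ := hτ
  have hG : EMetric.diam (Prod.fst '' Ei) ≤ (2⁻¹ : ℝ≥0∞) ^ j := by
    refine le_trans ?_ hEi
    simpa [EMetric.diam] using LipschitzWith.prod_fst.ediam_image_le Ei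
  obtain ⟨T, hTcard, hTmem⟩ := cube_card _ hG
  have hsupp : ∀ v ∉ T,
      (if v ∈ img then EMetric.diam {y | (aOf v, y) ∈ Ei} ^ (τ:ℝ) else 0) = 0 := by
    intro v hvT
    split_ifs with hv
    · by_contra hne
      have hslne : {y | (aOf v, y) ∈ Ei}.Nonempty := by
        rw [nonempty_iff_ne_empty]
        intro hemp
        rw [hemp] at hne
        simp [EMetric.diam, ENNReal.zero_rpow_of_pos hτ0] at hne
      obtain ⟨y, hy⟩ := hslne
      have hmem : aOf v ∈ Prod.fst '' Ei := ⟨(aOf v, y), hy, rfl⟩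
      have := hTmem _ hmem
      rw [haOf v hv] at this
      exact hvT this
    · rfl
  calc ∑' v : Fin m → ℤ, (if v ∈ img then EMetric.diam {y | (aOf v, y) ∈ Ei} ^ (τ:ℝ) else 0)
      = ∑ v ∈ T, (if v ∈ img then EMetric.diam {y | (aOf v, y) ∈ Ei} ^ (τ:ℝ) else 0) :=
        tsum_eq_sum hsupp
    _ ≤ ∑ _v ∈ T, EMetric.diam Ei ^ (τ:ℝ) := Finset.sum_le_sum fun v _ => by
        split_ifs with hv
        · exact ENNReal.rpow_le_rpow (slice_diam _ _) τ.coe_nonneg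
        · exact zero_le
    _ = T.card • (EMetric.diam Ei ^ (τ:ℝ)) := Finset.sum_const _
    _ = (T.card : ℝ≥0∞) * EMetric.diam Ei ^ (τ:ℝ) := nsmul_eq_mul _ _
    _ ≤ (3 ^ m : ℝ≥0∞) * EMetric.diam Ei ^ (τ:ℝ) := by
        refine mul_le_mul_left ?_ _
        exact_mod_cast hTcard

lemma level_bound (m n : ℕ) (E : ℕ → Set ((Fin m → ℝ) × (Fin n → ℝ)))
    (hdiam : ∀ i, EMetric.diam (E i) ≤ 1)
    (σ s τ : ℝ≥0) (hσs : (σ:ℝ) < s) (hτ : 0 < τ) (c₀ : ℝ≥0∞) (hc₀0 : c₀ ≠ 0) (hc₀t : c₀ ≠ ∞)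
    (j : ℕ) (AAj : Set (Fin m → ℝ))
    (hAAj : ∀ a ∈ AAj, ((1 - e2 ((σ:ℝ) - s)) * (c₀/2)) * (e2 ((σ:ℝ)-s))^j ≤
        ∑' i, if ((2⁻¹:ℝ≥0∞)^(j+1) < EMetric.diam (E i) ∧ EMetric.diam (E i) ≤ 2⁻¹^j)
          then EMetric.diam {y | (a,y) ∈ E i} ^ (τ:ℝ) else 0) :
    ((2⁻¹:ℝ≥0∞)^j)^(s:ℝ) * (∑' v : Fin m → ℤ, if v ∈ cubeIdx m j '' AAj then (1:ℝ≥0∞) else 0)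
      ≤ ((1 - e2 ((σ:ℝ)-s))⁻¹ * (c₀/2)⁻¹ * (3^m:ℝ≥0∞) * e2 σ) *
        ∑' i, if ((2⁻¹:ℝ≥0∞)^(j+1) < EMetric.diam (E i) ∧ EMetric.diam (E i) ≤ 2⁻¹^j)
          then EMetric.diam (E i) ^ ((σ:ℝ)+τ) else 0 := by
  classical
  set q : ℝ≥0∞ := e2 ((σ:ℝ) - s) with hq
  set I : ℕ → Prop := fun i =>
    (2⁻¹:ℝ≥0∞)^(j+1) < EMetric.diam (E i) ∧ EMetric.diam (E i) ≤ 2⁻¹^j with hI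
  set w : ℝ≥0∞ := ((1 - q) * (c₀/2)) * q^j with hw
  set img : Set (Fin m → ℤ) := cubeIdx m j '' AAj with himg
  set N : ℝ≥0∞ := ∑' v : Fin m → ℤ, if v ∈ img then (1:ℝ≥0∞) else 0 with hN
  set Tt : ℝ≥0∞ := ∑' i, if I i then EMetric.diam (E i) ^ (τ:ℝ) else 0 with hTt
  set U : ℝ≥0∞ := ∑' i, if I i then EMetric.diam (E i) ^ ((σ:ℝ)+τ) else 0 with hU
  have hq1 : q < 1 := e2_lt_one (by linarith)
  have h1q0 : (1 - q) ≠ 0 := (tsub_pos_of_lt hq1).ne'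
  have h1qT : (1 - q) ≠ ∞ := ne_top_of_le_ne_top ENNReal.one_ne_top tsub_le_self
  have hc20 : c₀/2 ≠ 0 := by
    simp [ENNReal.div_eq_zero_iff, hc₀0]
  have hc2T : c₀/2 ≠ ∞ := by
    simp [ENNReal.div_eq_top, hc₀t]
  have hw0 : w ≠ 0 := by
    rw [hw, hq]; rw [e2_pow]
    exact mul_ne_zero (mul_ne_zero h1q0 hc20) (e2_ne_zero _)
  have hwT : w ≠ ∞ := by
    rw [hw, hq, e2_pow]
    exact ENNReal.mul_ne_top (ENNReal.mul_ne_top h1qT hc2T) (e2_ne_top _)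
  -- choice of preimages
  set aOf : (Fin m → ℤ) → Fin m → ℝ := Function.invFunOn (cubeIdx m j) AAj with haOf
  have haOfmem : ∀ v ∈ img, aOf v ∈ AAj ∧ cubeIdx m j (aOf v) = v := by
    intro v hv
    obtain ⟨a, ha, rfl⟩ := hv
    exact ⟨Function.invFunOn_mem ⟨a, ha, rfl⟩, Function.invFunOn_eq ⟨a, ha, rfl⟩⟩
  -- L1 : w * N ≤ 3^m * Tt
  have hL1 : w * N ≤ (3^m : ℝ≥0∞) * Tt := by
    calc w * N = ∑' v : Fin m → ℤ, if v ∈ img then w else 0 := by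
          rw [hN, ← ENNReal.tsum_mul_left]
          exact tsum_congr fun v => by split_ifs <;> simp
      _ ≤ ∑' v : Fin m → ℤ, if v ∈ img then
            (∑' i, if I i then EMetric.diam {y | (aOf v, y) ∈ E i} ^ (τ:ℝ) else 0) else 0 := by
          refine ENNReal.tsum_le_tsum fun v => ?_
          split_ifs with hv
          · exact hAAj _ (haOfmem v hv).1
          · exact le_rfl
      _ = ∑' v : Fin m → ℤ, ∑' i,
            if v ∈ img then (if I i then EMetric.diam {y | (aOf v, y) ∈ E i} ^ (τ:ℝ) else 0)
            else 0 := by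
          refine tsum_congr fun v => ?_
          split_ifs with hv
          · rfl
          · exact tsum_zero.symm
      _ = ∑' i, ∑' v : Fin m → ℤ,
            if v ∈ img then (if I i then EMetric.diam {y | (aOf v, y) ∈ E i} ^ (τ:ℝ) else 0)
            else 0 := ENNReal.tsum_comm
      _ ≤ ∑' i, if I i then ((3^m : ℝ≥0∞) * EMetric.diam (E i) ^ (τ:ℝ)) else 0 := by
          refine ENNReal.tsum_le_tsum fun i => ?_
          by_cases hIi : I i
          · rw [if_pos hIi]
            have hz2 : ∀ v : Fin m → ℤ,
                (if v ∈ img then (if I i then EMetric.diam {y | (aOf v, y) ∈ E i} ^ (τ:ℝ) else 0)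
                else 0) = (if v ∈ img then EMetric.diam {y | (aOf v, y) ∈ E i} ^ (τ:ℝ) else 0) :=
              fun v => by
              by_cases h1 : v ∈ img
              · rw [if_pos h1, if_pos hIi, if_pos h1]
              · rw [if_neg h1, if_neg h1]
            rw [tsum_congr hz2]
            exact inner_count m n j τ hτ (E i) hIi.2 img aOf fun v hv => (haOfmem v hv).2
          · rw [if_neg hIi]
            have hz : ∀ v : Fin m → ℤ,
                (if v ∈ img then (if I i then EMetric.diam {y | (aOf v, y) ∈ E i} ^ (τ:ℝ) else 0)
                else 0) = 0 := fun v => by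
              by_cases h1 : v ∈ img
              · rw [if_pos h1, if_neg hIi]
              · rw [if_neg h1]
            rw [tsum_congr hz, tsum_zero]
      _ = (3^m : ℝ≥0∞) * Tt := by
          rw [hTt, ← ENNReal.tsum_mul_left]
          exact tsum_congr fun i => by split_ifs <;> simp
  -- L2 : Tt ≤ e2 ((j+1) * σ) * U
  have hL2 : Tt ≤ e2 (((j:ℝ)+1) * σ) * U := by
    rw [hTt, hU, ← ENNReal.tsum_mul_left]
    refine ENNReal.tsum_le_tsum fun i => ?_
    split_ifs with hIi
    · have hd0 : EMetric.diam (E i) ≠ 0 := (lt_of_le_of_lt zero_le hIi.1).ne'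
      have hdT : EMetric.diam (E i) ≠ ∞ := ne_top_of_le_ne_top ENNReal.one_ne_top (hdiam i)
      have hsplit : EMetric.diam (E i) ^ ((σ:ℝ)+τ)
          = EMetric.diam (E i) ^ (σ:ℝ) * EMetric.diam (E i) ^ (τ:ℝ) :=
        ENNReal.rpow_add _ _ hd0 hdT
      have hlow : e2 (-(((j:ℝ)+1) * σ)) ≤ EMetric.diam (E i) ^ (σ:ℝ) := by
        have h1 : ((2⁻¹:ℝ≥0∞)^(j+1)) ^ (σ:ℝ) ≤ EMetric.diam (E i) ^ (σ:ℝ) :=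
          ENNReal.rpow_le_rpow hIi.1.le σ.coe_nonneg
        rw [half_pow_e2, e2_rpow] at h1
        have : (-((j+1:ℕ):ℝ)) * σ = -(((j:ℝ)+1) * σ) := by push_cast; ring
        rwa [this] at h1
      calc EMetric.diam (E i) ^ (τ:ℝ)
          = (e2 (((j:ℝ)+1)*σ) * e2 (-(((j:ℝ)+1)*σ))) * EMetric.diam (E i) ^ (τ:ℝ) := by
            rw [e2_mul, add_neg_cancel]
            simp [e2]
        _ ≤ e2 (((j:ℝ)+1)*σ) * (EMetric.diam (E i) ^ (σ:ℝ) * EMetric.diam (E i) ^ (τ:ℝ)) := by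
            rw [mul_assoc]
            exact mul_le_mul_right (mul_le_mul_left hlow _) _
        _ = e2 (((j:ℝ)+1)*σ) * EMetric.diam (E i) ^ ((σ:ℝ)+τ) := by rw [hsplit]
    · simp
  -- combine
  have hstep : ((2⁻¹:ℝ≥0∞)^j)^(s:ℝ) * N
      = (e2 (-(j:ℝ)*s) * w⁻¹) * (w * N) := by
    rw [half_pow_e2, e2_rpow]
    rw [mul_assoc (e2 (-(j:ℝ)*s)) w⁻¹ (w*N), ← mul_assoc w⁻¹ w N,
      ENNReal.inv_mul_cancel hw0 hwT, one_mul]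
  have hwinv : w⁻¹ = (1-q)⁻¹ * (c₀/2)⁻¹ * e2 (((s:ℝ) - σ) * j) := by
    rw [hw, hq, e2_pow]
    rw [ENNReal.mul_inv (Or.inl (mul_ne_zero h1q0 hc20)) (Or.inr (e2_ne_zero _)),
      ENNReal.mul_inv (Or.inl h1q0) (Or.inr hc20), e2_inv]
    congr 1
    congr 1
    ring
  have hkey : (e2 (-(j:ℝ)*s) * w⁻¹) * ((3^m : ℝ≥0∞) * (e2 (((j:ℝ)+1) * σ) * U))
      = ((1-q)⁻¹ * (c₀/2)⁻¹ * (3^m:ℝ≥0∞) * e2 σ) * U := by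
    rw [hwinv]
    have hmerge : e2 (-(j:ℝ)*s) * e2 (((s:ℝ) - σ) * j) * e2 (((j:ℝ)+1) * σ) = e2 σ := by
      rw [e2_mul, e2_mul]
      congr 1
      ring
    calc (e2 (-(j:ℝ)*s) * ((1-q)⁻¹ * (c₀/2)⁻¹ * e2 (((s:ℝ) - σ) * j)))
          * ((3^m : ℝ≥0∞) * (e2 (((j:ℝ)+1) * σ) * U))
        = ((1-q)⁻¹ * (c₀/2)⁻¹ * (3^m:ℝ≥0∞)
            * (e2 (-(j:ℝ)*s) * e2 (((s:ℝ) - σ) * j) * e2 (((j:ℝ)+1) * σ))) * U := by ring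
      _ = _ := by rw [hmerge]
  calc ((2⁻¹:ℝ≥0∞)^j)^(s:ℝ) * N = (e2 (-(j:ℝ)*s) * w⁻¹) * (w * N) := hstep
    _ ≤ (e2 (-(j:ℝ)*s) * w⁻¹) * ((3^m : ℝ≥0∞) * Tt) := mul_le_mul_right hL1 _
    _ ≤ (e2 (-(j:ℝ)*s) * w⁻¹) * ((3^m : ℝ≥0∞) * (e2 (((j:ℝ)+1) * σ) * U)) :=
        mul_le_mul_right (mul_le_mul_right hL2 _) _
    _ = ((1-q)⁻¹ * (c₀/2)⁻¹ * (3^m:ℝ≥0∞) * e2 σ) * U := hkey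

lemma marstrand_cover_bound (m n : ℕ) (B : Set ((Fin m → ℝ) × (Fin n → ℝ)))
    (A' : Set (Fin m → ℝ)) (σ s τ : ℝ≥0) (hσs : (σ:ℝ) < (s:ℝ)) (hτ : 0 < τ)
    (c₀ : ℝ≥0∞) (hc₀0 : 0 < c₀) (hc₀t : c₀ ≠ ∞)
    (hA' : ∀ a ∈ A', c₀ ≤ slHc (τ:ℝ) {y : Fin n → ℝ | (a, y) ∈ B})
    (E : ℕ → Set ((Fin m → ℝ) × (Fin n → ℝ))) (hcov : B ⊆ ⋃ i, E i)
    (hdiam : ∀ i, EMetric.diam (E i) ≤ 1) :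
    slHc (s:ℝ) A' ≤ ((1 - e2 ((σ:ℝ) - s))⁻¹ * (c₀/2)⁻¹ * (3^m : ℝ≥0∞) * e2 σ) *
      ∑' i, EMetric.diam (E i) ^ ((σ:ℝ) + (τ:ℝ)) := by
  classical
  have hτ0 : (0:ℝ) < τ := hτ
  have hs0 : (0:ℝ) < s := lt_of_le_of_lt σ.coe_nonneg hσs
  set q : ℝ≥0∞ := e2 ((σ:ℝ) - s) with hq
  have hq1 : q < 1 := e2_lt_one (by linarith)
  have h1q0 : (1 - q) ≠ 0 := (tsub_pos_of_lt hq1).ne'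
  have h1qT : (1 - q) ≠ ∞ := ne_top_of_le_ne_top ENNReal.one_ne_top tsub_le_self
  have hc20 : c₀/2 ≠ 0 := by simp [ENNReal.div_eq_zero_iff, hc₀0.ne']
  have hc2T : c₀/2 ≠ ∞ := by simp [ENNReal.div_eq_top, hc₀t]
  set I : ℕ → ℕ → Prop := fun j i =>
    (2⁻¹:ℝ≥0∞)^(j+1) < EMetric.diam (E i) ∧ EMetric.diam (E i) ≤ 2⁻¹^j with hI
  set w : ℕ → ℝ≥0∞ := fun j => ((1 - q) * (c₀/2)) * q^j with hw
  set AA : ℕ → Set (Fin m → ℝ) := fun j =>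
    {a ∈ A' | w j ≤ ∑' i, if I j i then EMetric.diam {y | (a,y) ∈ E i} ^ (τ:ℝ) else 0} with hAA
  -- pigeonhole
  have hpig : ∀ a ∈ A', ∃ j, a ∈ AA j := by
    intro a ha
    by_contra hno
    push_neg at hno
    have hlt : ∀ j, (∑' i, if I j i then EMetric.diam {y | (a,y) ∈ E i} ^ (τ:ℝ) else 0) < w j :=
      fun j => not_le.mp fun hle => hno j ⟨ha, hle⟩
    have h1 : c₀ ≤ slHc (τ:ℝ) {y | (a,y) ∈ B} := hA' a ha
    have h2 : slHc (τ:ℝ) {y : Fin n → ℝ | (a,y) ∈ B}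
        ≤ ∑' i, EMetric.diam {y : Fin n → ℝ | (a,y) ∈ E i} ^ (τ:ℝ) := by
      refine slHc_le_of_cover hτ0 _ _ fun y hy => ?_
      obtain ⟨i, hi⟩ := mem_iUnion.mp (hcov hy)
      exact mem_iUnion.mpr ⟨i, hi⟩
    have h3 : (∑' i, EMetric.diam {y : Fin n → ℝ | (a,y) ∈ E i} ^ (τ:ℝ))
        ≤ ∑' j, ∑' i, if I j i then EMetric.diam {y | (a,y) ∈ E i} ^ (τ:ℝ) else 0 := by
      rw [ENNReal.tsum_comm]
      refine ENNReal.tsum_le_tsum fun i => ?_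
      by_cases h0 : EMetric.diam (E i) = 0
      · have hf0 : EMetric.diam {y : Fin n → ℝ | (a,y) ∈ E i} ^ (τ:ℝ) = 0 := by
          have hle := ENNReal.rpow_le_rpow (slice_diam a (E i)) τ.coe_nonneg
          rw [h0, ENNReal.zero_rpow_of_pos hτ0] at hle
          exact le_antisymm hle zero_le
        simp [hf0]
      · obtain ⟨j, hj⟩ := exists_level h0 (hdiam i)
        calc EMetric.diam {y | (a,y) ∈ E i} ^ (τ:ℝ)
            = (if I j i then EMetric.diam {y | (a,y) ∈ E i} ^ (τ:ℝ) else 0) := (if_pos hj).symm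
          _ ≤ ∑' j', if I j' i then EMetric.diam {y | (a,y) ∈ E i} ^ (τ:ℝ) else 0 :=
            ENNReal.le_tsum j
    have h4 : (∑' j, ∑' i, if I j i then EMetric.diam {y | (a,y) ∈ E i} ^ (τ:ℝ) else 0)
        ≤ c₀ / 2 := by
      calc (∑' j, ∑' i, if I j i then EMetric.diam {y | (a,y) ∈ E i} ^ (τ:ℝ) else 0)
          ≤ ∑' j, w j := ENNReal.tsum_le_tsum fun j => (hlt j).le
        _ = ((1-q)*(c₀/2)) * ∑' j, q^j := ENNReal.tsum_mul_left
        _ = ((1-q)*(c₀/2)) * (1-q)⁻¹ := by rw [ENNReal.tsum_geometric]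
        _ = c₀/2 := by
            rw [mul_comm (1-q) (c₀/2), mul_assoc, ENNReal.mul_inv_cancel h1q0 h1qT, mul_one]
    exact absurd (h1.trans (h2.trans h3))
      (not_le.mpr (h4.trans_lt (ENNReal.half_lt_self hc₀0.ne' hc₀t)))
  -- cube cover
  haveI : Encodable (Fin m → ℤ) := Encodable.ofCountable _
  set C : ℕ × (Fin m → ℤ) → Set (Fin m → ℝ) := fun p =>
    if p.2 ∈ cubeIdx m p.1 '' AA p.1 then {x | cubeIdx m p.1 x = p.2} else ∅ with hC
  have hCcov : A' ⊆ ⋃ p, C p := by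
    intro a ha
    obtain ⟨j, haj⟩ := hpig a ha
    refine mem_iUnion.2 ⟨(j, cubeIdx m j a), ?_⟩
    have hmem : cubeIdx m j a ∈ cubeIdx m j '' AA j := mem_image_of_mem _ haj
    rw [hC]
    simp only [if_pos hmem]
    exact rfl
  have hstep1 : slHc (s:ℝ) A' ≤ ∑' (p : ℕ × (Fin m → ℤ)),
      (if p.2 ∈ cubeIdx m p.1 '' AA p.1 then ((2⁻¹:ℝ≥0∞)^p.1) ^ (s:ℝ) else 0) := by
    refine le_trans (slHc_le_of_cover hs0 A' C hCcov) (ENNReal.tsum_le_tsum fun p => ?_)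
    rw [hC]
    by_cases hp : p.2 ∈ cubeIdx m p.1 '' AA p.1
    · simp only [if_pos hp]
      exact ENNReal.rpow_le_rpow (cube_diam m p.1 p.2) hs0.le
    · simp only [if_neg hp, EMetric.diam, EMetric.diam_empty, ENNReal.zero_rpow_of_pos hs0, le_refl]
  replace hstep1 := hstep1.trans_eq (ENNReal.tsum_prod
    (f := fun (j : ℕ) (v : Fin m → ℤ) =>
      if v ∈ cubeIdx m j '' AA j then ((2⁻¹:ℝ≥0∞)^j) ^ (s:ℝ) else 0))
  have hstep2 : (∑' j, ∑' (v : Fin m → ℤ),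
        (if v ∈ cubeIdx m j '' AA j then ((2⁻¹:ℝ≥0∞)^j) ^ (s:ℝ) else 0))
      ≤ ((1 - q)⁻¹ * (c₀/2)⁻¹ * (3^m : ℝ≥0∞) * e2 σ) *
        ∑' j, ∑' i, if I j i then EMetric.diam (E i) ^ ((σ:ℝ)+τ) else 0 := by
    rw [← ENNReal.tsum_mul_left]
    refine ENNReal.tsum_le_tsum fun j => ?_
    have hpull : (∑' (v : Fin m → ℤ),
          (if v ∈ cubeIdx m j '' AA j then ((2⁻¹:ℝ≥0∞)^j) ^ (s:ℝ) else 0))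
        = ((2⁻¹:ℝ≥0∞)^j)^(s:ℝ) *
          ∑' (v : Fin m → ℤ), (if v ∈ cubeIdx m j '' AA j then (1:ℝ≥0∞) else 0) := by
      rw [← ENNReal.tsum_mul_left]
      exact tsum_congr fun v => by split_ifs <;> simp
    rw [hpull]
    exact level_bound m n E hdiam σ s τ hσs hτ c₀ hc₀0.ne' hc₀t j (AA j) fun a haj => haj.2
  have hstep3 : (∑' j, ∑' i, if I j i then EMetric.diam (E i) ^ ((σ:ℝ)+τ) else 0)
      ≤ ∑' i, EMetric.diam (E i) ^ ((σ:ℝ) + (τ:ℝ)) := by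
    rw [ENNReal.tsum_comm]
    refine ENNReal.tsum_le_tsum fun i => ?_
    by_cases hex : ∃ j, I j i
    · obtain ⟨j₀, hj₀⟩ := hex
      rw [tsum_eq_single j₀ ?_]
      · rw [if_pos hj₀]
      · intro j hne
        rw [if_neg]
        intro hj
        exact hne (level_unique hj hj₀)
    · push_neg at hex
      have hz : ∀ j, (if I j i then EMetric.diam (E i) ^ ((σ:ℝ)+τ) else 0) = 0 := fun j =>
        if_neg (hex j)
      rw [tsum_congr hz, tsum_zero]
      exact zero_le
  exact hstep1.trans (hstep2.trans (mul_le_mul_right hstep3 _))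

lemma marstrand_key (m n : ℕ) (B : Set ((Fin m → ℝ) × (Fin n → ℝ)))
    (A' : Set (Fin m → ℝ)) (σ s τ : ℝ≥0) (hσs : (σ:ℝ) < (s:ℝ)) (hτ : 0 < τ)
    (c₀ : ℝ≥0∞) (hc₀0 : 0 < c₀) (hc₀t : c₀ ≠ ∞)
    (hA' : ∀ a ∈ A', c₀ ≤ slHc (τ:ℝ) {y : Fin n → ℝ | (a, y) ∈ B}) :
    ∃ K : ℝ≥0∞, K ≠ 0 ∧ K ≠ ∞ ∧ K⁻¹ * slHc (s:ℝ) A' ≤ μH[(σ:ℝ) + (τ:ℝ)] B := by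
  classical
  have hτ0 : (0:ℝ) < τ := NNReal.coe_pos.2 hτ
  have hστ0 : (0:ℝ) < (σ:ℝ) + τ := add_pos_of_nonneg_of_pos σ.coe_nonneg hτ0
  set q : ℝ≥0∞ := e2 ((σ:ℝ) - s) with hq
  have hq1 : q < 1 := e2_lt_one (by linarith)
  have h1q0 : (1 - q) ≠ 0 := (tsub_pos_of_lt hq1).ne'
  have h1qT : (1 - q) ≠ ∞ := ne_top_of_le_ne_top ENNReal.one_ne_top tsub_le_self
  have hc20 : c₀/2 ≠ 0 := by simp [ENNReal.div_eq_zero_iff, hc₀0.ne']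
  have hc2T : c₀/2 ≠ ∞ := by simp [ENNReal.div_eq_top, hc₀t]
  set K : ℝ≥0∞ := (1 - q)⁻¹ * (c₀/2)⁻¹ * (3^m : ℝ≥0∞) * e2 σ with hK
  have hK0 : K ≠ 0 := by
    rw [hK]
    refine mul_ne_zero (mul_ne_zero (mul_ne_zero ?_ ?_) ?_) (e2_ne_zero _)
    · exact ENNReal.inv_ne_zero.2 h1qT
    · exact ENNReal.inv_ne_zero.2 hc2T
    · exact pow_ne_zero _ (by norm_num)
  have hKT : K ≠ ∞ := by
    rw [hK]
    refine ENNReal.mul_ne_top (ENNReal.mul_ne_top (ENNReal.mul_ne_top ?_ ?_) ?_) (e2_ne_top _)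
    · exact ENNReal.inv_ne_top.2 h1q0
    · exact ENNReal.inv_ne_top.2 hc20
    · exact ENNReal.pow_ne_top (by norm_num)
  refine ⟨K, hK0, hKT, ?_⟩
  rw [Measure.hausdorffMeasure_apply]
  refine le_trans ?_ (le_iSup₂ (1:ℝ≥0∞) zero_lt_one)
  refine le_iInf fun E => le_iInf fun hcov => le_iInf fun hd => ?_
  have hsum_eq : (∑' i, ⨆ _ : (E i).Nonempty, EMetric.diam (E i) ^ ((σ:ℝ) + (τ:ℝ)))
      = ∑' i, EMetric.diam (E i) ^ ((σ:ℝ) + (τ:ℝ)) := by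
    refine tsum_congr fun i => ?_
    rcases (E i).eq_empty_or_nonempty with h | h
    · simp [h, EMetric.diam, ENNReal.zero_rpow_of_pos hστ0]
    · rw [iSup_pos h]
  refine le_trans ?_ hsum_eq.symm.le
  have hmain := marstrand_cover_bound m n B A' σ s τ hσs hτ c₀ hc₀0 hc₀t hA' E hcov hd
  calc K⁻¹ * slHc (s:ℝ) A'
      ≤ K⁻¹ * (K * ∑' i, EMetric.diam (E i) ^ ((σ:ℝ) + (τ:ℝ))) := mul_le_mul_right hmain _
    _ = ∑' i, EMetric.diam (E i) ^ ((σ:ℝ) + (τ:ℝ)) := by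
        rw [← mul_assoc, ENNReal.inv_mul_cancel hK0 hKT, one_mul]

lemma marstrand_sum_le (m n : ℕ) (A : Set (Fin m → ℝ))
    (B : Set ((Fin m → ℝ) × (Fin n → ℝ))) (σ τ : ℝ≥0)
    (hσ : (σ : ℝ≥0∞) < dimH A) (hτpos : 0 < τ)
    (hτ : ∀ a ∈ A, (τ : ℝ≥0∞) < dimH {y : Fin n → ℝ | (a, y) ∈ B}) :
    (σ : ℝ≥0∞) + (τ : ℝ≥0∞) ≤ dimH B := by
  classical
  have hτ0 : (0:ℝ) < τ := NNReal.coe_pos.2 hτpos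
  -- positive content of slices
  have hslice : ∀ a ∈ A, 0 < slHc (τ:ℝ) {y : Fin n → ℝ | (a, y) ∈ B} := by
    intro a ha
    have hmeas : μH[(τ:ℝ)] {y : Fin n → ℝ | (a, y) ∈ B} = ∞ :=
      hausdorffMeasure_of_lt_dimH (hτ a ha)
    exact slHc_pos hτ0 (by rw [hmeas]; exact ENNReal.top_ne_zero)
  set AA : ℕ → Set (Fin m → ℝ) := fun k =>
    {a ∈ A | ((k:ℝ≥0∞) + 1)⁻¹ ≤ slHc (τ:ℝ) {y : Fin n → ℝ | (a, y) ∈ B}} with hAA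
  have hAcup : A = ⋃ k, AA k := by
    refine Subset.antisymm (fun a ha => ?_) (iUnion_subset fun k => sep_subset _ _)
    obtain ⟨k, hk⟩ := ENNReal.exists_inv_nat_lt (hslice a ha).ne'
    refine mem_iUnion.2 ⟨k, ha, ?_⟩
    refine le_trans ?_ hk.le
    exact ENNReal.inv_le_inv' (le_add_of_nonneg_right zero_le)
  have hdim : (σ : ℝ≥0∞) < ⨆ k, dimH (AA k) := by
    rw [← dimH_iUnion, ← hAcup]; exact hσ
  obtain ⟨k, hk⟩ := lt_iSup_iff.mp hdim
  obtain ⟨s, hs1, hs2⟩ := ENNReal.lt_iff_exists_nnreal_btwn.mp hk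
  have hσs : (σ:ℝ) < (s:ℝ) := by exact_mod_cast ENNReal.coe_lt_coe.mp hs1
  have hs0 : (0:ℝ) < s := lt_of_le_of_lt σ.coe_nonneg hσs
  have hAKpos : 0 < slHc (s:ℝ) (AA k) := by
    have hmeas : μH[(s:ℝ)] (AA k) = ∞ := hausdorffMeasure_of_lt_dimH hs2
    exact slHc_pos hs0 (by rw [hmeas]; exact ENNReal.top_ne_zero)
  have hc₀0 : (0:ℝ≥0∞) < ((k:ℝ≥0∞) + 1)⁻¹ := ENNReal.inv_pos.2 (by
    exact ENNReal.add_ne_top.2 ⟨ENNReal.natCast_ne_top k, ENNReal.one_ne_top⟩)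
  have hc₀t : ((k:ℝ≥0∞) + 1)⁻¹ ≠ ∞ := ENNReal.inv_ne_top.2 (by
    simp)
  obtain ⟨K, hK0, hKT, hle⟩ := marstrand_key m n B (AA k) σ s τ hσs hτpos _ hc₀0 hc₀t
    (fun a ha => ha.2)
  have hpos : μH[(σ:ℝ) + (τ:ℝ)] B ≠ 0 := by
    refine fun h0 => ?_
    rw [h0, le_zero_iff] at hle
    rcases mul_eq_zero.mp hle with h | h
    · exact ENNReal.inv_ne_zero.2 hKT h
    · exact hAKpos.ne' h
  have := le_dimH_of_hausdorffMeasure_ne_zero (d := σ + τ) (by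
    have : ((σ + τ : ℝ≥0) : ℝ) = (σ:ℝ) + (τ:ℝ) := by push_cast; ring
    rw [this]; exact hpos)
  rwa [ENNReal.coe_add] at this

/-- Marstrand Slicing Theorem (Kleinbock–Margulis form), for subsets of
Euclidean spaces: if every slice `B_a`, `a ∈ A`, is nonempty, then
`dim_H B ≥ dim_H A + inf_{a ∈ A} dim_H B_a`. -/
theorem marstrand_slicing
    (m n : ℕ) (A : Set (Fin m → ℝ)) (B : Set ((Fin m → ℝ) × (Fin n → ℝ)))
    (hA : A.Nonempty)
    (hne : ∀ a ∈ A, {y : Fin n → ℝ | (a, y) ∈ B}.Nonempty) :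
    dimH A + ⨅ a ∈ A, dimH {y : Fin n → ℝ | (a, y) ∈ B} ≤ dimH B := by
  classical
  obtain ⟨a₀, ha₀⟩ := hA
  -- projection bound : dimH A ≤ dimH B
  have hproj : dimH A ≤ dimH B := by
    have hsub : A ⊆ Prod.fst '' B := fun a ha => by
      obtain ⟨y, hy⟩ := hne a ha
      exact ⟨(a, y), hy, rfl⟩
    exact le_trans (dimH_mono hsub) (LipschitzWith.prod_fst.dimH_image_le B)
  -- slice embedding bound
  have hslice : ∀ a ∈ A, dimH {y : Fin n → ℝ | (a, y) ∈ B} ≤ dimH B := by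
    intro a _
    have hg : Isometry (fun y : Fin n → ℝ => ((a, y) : (Fin m → ℝ) × (Fin n → ℝ))) := by
      intro y y'
      simp [Prod.edist_eq]
    have himg : (fun y : Fin n → ℝ => ((a, y) : (Fin m → ℝ) × (Fin n → ℝ)))
        '' {y | (a, y) ∈ B} ⊆ B := by
      rintro _ ⟨y, hy, rfl⟩
      exact hy
    calc dimH {y : Fin n → ℝ | (a, y) ∈ B}
        = dimH ((fun y : Fin n → ℝ => ((a, y) : (Fin m → ℝ) × (Fin n → ℝ)))
            '' {y | (a, y) ∈ B}) := (hg.dimH_image _).symm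
      _ ≤ dimH B := dimH_mono himg
  set t₀ : ℝ≥0∞ := ⨅ a ∈ A, dimH {y : Fin n → ℝ | (a, y) ∈ B} with ht₀
  rcases eq_or_ne t₀ 0 with h0 | h0
  · rw [h0, add_zero]; exact hproj
  rcases eq_or_ne (dimH A) 0 with hA0 | hA0
  · rw [hA0, zero_add]
    exact le_trans (iInf₂_le a₀ ha₀) (hslice a₀ ha₀)
  have hAfin : dimH A ≠ ∞ := by
    refine ne_top_of_le_ne_top (?_ : (m : ℝ≥0∞) ≠ ∞) ?_
    · exact ENNReal.natCast_ne_top m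
    · rw [← Real.dimH_univ_pi_fin m]
      exact dimH_mono (subset_univ A)
  have htfin : t₀ ≠ ∞ := by
    refine ne_top_of_le_ne_top (?_ : (n : ℝ≥0∞) ≠ ∞) ?_
    · exact ENNReal.natCast_ne_top n
    · refine le_trans (iInf₂_le a₀ ha₀) ?_
      rw [← Real.dimH_univ_pi_fin n]
      exact dimH_mono (subset_univ _)
  -- main case
  have H : ∀ σ τ : ℝ≥0, (σ : ℝ≥0∞) < dimH A → 0 < τ → (τ : ℝ≥0∞) < t₀ →
      (σ : ℝ≥0∞) + (τ : ℝ≥0∞) ≤ dimH B := by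
    intro σ τ hσ hτp hτlt
    refine marstrand_sum_le m n A B σ τ hσ hτp fun a ha => ?_
    exact lt_of_lt_of_le hτlt (iInf₂_le a ha)
  by_contra hcon
  push_neg at hcon
  set x : ℝ≥0 := (dimH A).toNNReal with hx
  set y : ℝ≥0 := t₀.toNNReal with hy
  have hxe : dimH A = (x : ℝ≥0∞) := (ENNReal.coe_toNNReal hAfin).symm
  have hye : t₀ = (y : ℝ≥0∞) := (ENNReal.coe_toNNReal htfin).symm
  have hx0 : (0:ℝ) < x := by
    rw [NNReal.coe_pos]
    exact pos_iff_ne_zero.mpr fun h => hA0 (by rw [hxe, h]; rfl)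
  have hy0 : (0:ℝ) < y := by
    rw [NNReal.coe_pos]
    exact pos_iff_ne_zero.mpr fun h => h0 (by rw [hye, h]; rfl)
  rw [hxe, hye, ← ENNReal.coe_add] at hcon
  obtain ⟨r, hr1, hr2⟩ := ENNReal.lt_iff_exists_nnreal_btwn.mp hcon
  have hrxy : (r : ℝ) < (x : ℝ) + y := by exact_mod_cast ENNReal.coe_lt_coe.mp hr2
  -- choose σ, τ
  set d : ℝ := ((x:ℝ) + y - r) / 2 with hd
  have hdpos : 0 < d := by rw [hd]; linarith
  set σr : ℝ := max ((x:ℝ) - d) ((x:ℝ)/2) with hσr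
  set τr : ℝ := max ((y:ℝ) - d) ((y:ℝ)/2) with hτr
  have hσrpos : 0 < σr := lt_max_of_lt_right (by linarith)
  have hτrpos : 0 < τr := lt_max_of_lt_right (by linarith)
  have hσrlt : σr < (x:ℝ) := max_lt (by linarith) (by linarith)
  have hτrlt : τr < (y:ℝ) := max_lt (by linarith) (by linarith)
  have hsum : (r:ℝ) ≤ σr + τr := by
    have h1 : (x:ℝ) - d ≤ σr := le_max_left _ _
    have h2 : (y:ℝ) - d ≤ τr := le_max_left _ _
    rw [hd] at h1 h2
    linarith
  set σ : ℝ≥0 := Real.toNNReal σr with hσdef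
  set τ : ℝ≥0 := Real.toNNReal τr with hτdef
  have hσcoe : (σ : ℝ) = σr := Real.coe_toNNReal _ hσrpos.le
  have hτcoe : (τ : ℝ) = τr := Real.coe_toNNReal _ hτrpos.le
  have h1 : (σ : ℝ≥0∞) < dimH A := by
    rw [hxe, ENNReal.coe_lt_coe, ← NNReal.coe_lt_coe, hσcoe]
    exact hσrlt
  have h2 : (0:ℝ≥0) < τ := by
    rw [← NNReal.coe_pos, hτcoe]; exact hτrpos
  have h3 : (τ : ℝ≥0∞) < t₀ := by
    rw [hye, ENNReal.coe_lt_coe, ← NNReal.coe_lt_coe, hτcoe]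
    exact hτrlt
  have hle := H σ τ h1 h2 h3
  have hrle : (r : ℝ≥0∞) ≤ (σ : ℝ≥0∞) + τ := by
    rw [← ENNReal.coe_add, ENNReal.coe_le_coe, ← NNReal.coe_le_coe]
    push_cast
    rw [hσcoe, hτcoe]
    exact hsum
  exact absurd (hrle.trans hle) (not_le.mpr hr1)
end

section
/- Let (f_n)_{n≥0} be a sequence of measurable functions on I = [-1/2, 1/2] (with Lebesgue measure), uniformly bounded by a constant M, and suppose there are constants C > 0 and λ > 1 such that |∫_I f_n f_m dθ| ≤ C λ^{-|n-m|/2} for all n, m ≥ 0. Then for almost every φ ∈ I, (1/N) Σ_{n=0}^{N-1} f_n(φ) → 0 as N → ∞. -/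
open MeasureTheory Filter

/-- If `(f_n)` is a uniformly bounded sequence of measurable functions on
`I = [-1/2, 1/2]` with almost-orthogonality `|∫_I f_n f_m| ≤ C λ^{-|n-m|/2}` for some
`λ > 1`, then for a.e. `φ ∈ I` the averages `(1/N) Σ_{n<N} f_n(φ)` tend to `0`. -/
theorem almost_orthogonal_averages_tend_to_zero
    (f : ℕ → ℝ → ℝ) (M : ℝ)
    (hmeas : ∀ n, Measurable (f n))
    (hbd : ∀ n x, |f n x| ≤ M)
    (C lam : ℝ) (hC : 0 < C) (hlam : 1 < lam)
    (hcorr : ∀ n m : ℕ,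
      |∫ θ in Set.Icc (-(1 : ℝ)/2) (1/2), f n θ * f m θ| ≤
        C * lam ^ (-(|(n : ℝ) - (m : ℝ)|) / 2)) :
    ∀ᵐ φ ∂(volume.restrict (Set.Icc (-(1 : ℝ)/2) (1/2))),
      Tendsto (fun N : ℕ => (1 / (N : ℝ)) * ∑ n ∈ Finset.range N, f n φ)
        atTop (nhds 0) := by
  set I : Set ℝ := Set.Icc (-(1:ℝ)/2) (1/2) with hIdef
  set μ : Measure ℝ := volume.restrict I with hμdef
  haveI : IsFiniteMeasure μ := by
    constructor
    rw [hμdef, Measure.restrict_apply_univ]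
    exact (measure_Icc_lt_top)
  have hM : 0 ≤ M := le_trans (abs_nonneg _) (hbd 0 0)
  have hlam0 : (0:ℝ) < lam := lt_trans one_pos hlam
  set r : ℝ := lam ^ (-(1:ℝ)/2) with hrdef
  have hr0 : 0 < r := Real.rpow_pos_of_pos hlam0 _
  have hr1 : r < 1 := by
    rw [hrdef]
    exact Real.rpow_lt_one_of_one_lt_of_neg hlam (by norm_num)
  have hr1' : 0 < 1 - r := by linarith
  set A : ℝ := 2 * C * (1 - r)⁻¹ with hAdef
  have hA0 : 0 < A := by
    apply mul_pos (by linarith) (inv_pos.mpr hr1')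
  set S : ℕ → ℝ → ℝ := fun N φ => ∑ n ∈ Finset.range N, f n φ with hSdef
  -- rewrite the correlation bound with natural distance
  have hcast : ∀ n m : ℕ, |(n:ℝ) - (m:ℝ)| = ((Nat.dist n m : ℕ) : ℝ) := by
    intro n m
    rcases le_total m n with h | h
    · rw [Nat.dist_eq_sub_of_le_right h, abs_of_nonneg (by
        simpa using (Nat.cast_le (α := ℝ)).mpr h)]
      push_cast [h]
      ring
    · rw [Nat.dist_eq_sub_of_le h, abs_of_nonpos (by
        simpa using (Nat.cast_le (α := ℝ)).mpr h)]
      push_cast [h]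
      ring
  have hcorr' : ∀ n m : ℕ, |∫ θ, f n θ * f m θ ∂μ| ≤ C * r ^ (Nat.dist n m) := by
    intro n m
    have h2 : lam ^ (-(|(n:ℝ) - (m:ℝ)|)/2) = r ^ (Nat.dist n m) := by
      rw [hcast n m, hrdef, ← Real.rpow_natCast (lam ^ (-(1:ℝ)/2)) (Nat.dist n m),
        ← Real.rpow_mul hlam0.le]
      congr 1
      ring
    rw [← h2]
    exact hcorr n m
  -- geometric series bound for injective exponents
  have hsumgeom : Summable (fun j : ℕ => r ^ j) := summable_geometric_of_lt_one hr0.le hr1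
  have geom : ∀ (s : Finset ℕ) (g : ℕ → ℕ), Set.InjOn g s →
      ∑ m ∈ s, r ^ g m ≤ (1 - r)⁻¹ := by
    intro s g hg
    have h1 : ∑ m ∈ s, r ^ g m = ∑ j ∈ s.image g, r ^ j :=
      (Finset.sum_image (fun a ha b hb h => hg ha hb h)).symm
    rw [h1]
    calc ∑ j ∈ s.image g, r ^ j ≤ ∑' j, r ^ j :=
          Summable.sum_le_tsum _ (fun i _ => (pow_pos hr0 i).le) hsumgeom
      _ = (1 - r)⁻¹ := tsum_geometric_of_lt_one hr0.le hr1
  -- row bound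
  have row : ∀ n N : ℕ, ∑ m ∈ Finset.range N, r ^ Nat.dist n m ≤ 2 * (1 - r)⁻¹ := by
    intro n N
    rw [← Finset.sum_filter_add_sum_filter_not (Finset.range N) (fun m => m ≤ n),
      two_mul]
    have h1 : ∑ m ∈ (Finset.range N).filter (fun m => m ≤ n), r ^ Nat.dist n m
        ≤ (1 - r)⁻¹ := by
      have heq : ∑ m ∈ (Finset.range N).filter (fun m => m ≤ n), r ^ Nat.dist n m
          = ∑ m ∈ (Finset.range N).filter (fun m => m ≤ n), r ^ (n - m) := by
        apply Finset.sum_congr rfl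
        intro m hm
        simp only [Finset.mem_filter] at hm
        rw [Nat.dist_eq_sub_of_le_right hm.2]
      rw [heq]
      apply geom _ (fun m => n - m)
      intro a ha b hb h
      simp only [Finset.coe_filter, Set.mem_setOf_eq, Finset.mem_range] at ha hb
      have h' : n - a = n - b := h
      omega
    have h2 : ∑ m ∈ (Finset.range N).filter (fun m => ¬ m ≤ n), r ^ Nat.dist n m
        ≤ (1 - r)⁻¹ := by
      have heq : ∑ m ∈ (Finset.range N).filter (fun m => ¬ m ≤ n), r ^ Nat.dist n m
          = ∑ m ∈ (Finset.range N).filter (fun m => ¬ m ≤ n), r ^ (m - n) := by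
        apply Finset.sum_congr rfl
        intro m hm
        simp only [Finset.mem_filter] at hm
        rw [Nat.dist_eq_sub_of_le (le_of_not_ge hm.2)]
      rw [heq]
      apply geom _ (fun m => m - n)
      intro a ha b hb h
      simp only [Finset.coe_filter, Set.mem_setOf_eq, Finset.mem_range] at ha hb
      have h' : a - n = b - n := h
      omega
    exact add_le_add h1 h2
  -- integrability of products
  have hint : ∀ n m : ℕ, Integrable (fun θ => f n θ * f m θ) μ := by
    intro n m
    apply Integrable.mono' (integrable_const (M * M))
    · exact ((hmeas n).mul (hmeas m)).aestronglyMeasurable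
    · apply ae_of_all
      intro x
      rw [Real.norm_eq_abs, abs_mul]
      exact mul_le_mul (hbd n x) (hbd m x) (abs_nonneg _) hM
  have hSmeas : ∀ N, Measurable (S N) := by
    intro N
    apply Finset.measurable_sum
    intro n _
    exact hmeas n
  have hSsqint : ∀ N, Integrable (fun θ => (S N θ)^2) μ := by
    intro N
    have heq : ∀ θ, (S N θ)^2
        = ∑ n ∈ Finset.range N, ∑ m ∈ Finset.range N, f n θ * f m θ := by
      intro θ
      rw [hSdef]
      simp only
      rw [sq, Finset.sum_mul_sum]
    simp_rw [heq]
    apply integrable_finset_sum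
    intro n _
    exact integrable_finset_sum _ (fun m _ => hint n m)
  -- second moment bound
  have hmom : ∀ N : ℕ, ∫ θ, (S N θ)^2 ∂μ ≤ (N : ℝ) * A := by
    intro N
    have hexp : ∫ θ, (S N θ)^2 ∂μ
        = ∑ n ∈ Finset.range N, ∑ m ∈ Finset.range N, ∫ θ, f n θ * f m θ ∂μ := by
      have heq : ∀ θ, (S N θ)^2
          = ∑ n ∈ Finset.range N, ∑ m ∈ Finset.range N, f n θ * f m θ := by
        intro θ
        rw [hSdef]
        simp only
        rw [sq, Finset.sum_mul_sum]
      simp_rw [heq]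
      rw [integral_finset_sum _ (fun n _ => integrable_finset_sum _ (fun m _ => hint n m))]
      exact Finset.sum_congr rfl (fun n _ => integral_finset_sum _ (fun m _ => hint n m))
    rw [hexp]
    calc ∑ n ∈ Finset.range N, ∑ m ∈ Finset.range N, ∫ θ, f n θ * f m θ ∂μ
        ≤ ∑ n ∈ Finset.range N, ∑ m ∈ Finset.range N, C * r ^ Nat.dist n m := by
          apply Finset.sum_le_sum
          intro n _
          apply Finset.sum_le_sum
          intro m _
          exact le_trans (le_abs_self _) (hcorr' n m)
      _ = ∑ n ∈ Finset.range N, C * ∑ m ∈ Finset.range N, r ^ Nat.dist n m := by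
          simp_rw [Finset.mul_sum]
      _ ≤ ∑ n ∈ Finset.range N, C * (2 * (1 - r)⁻¹) := by
          apply Finset.sum_le_sum
          intro n _
          exact mul_le_mul_of_nonneg_left (row n N) hC.le
      _ = (N : ℝ) * A := by
          rw [Finset.sum_const, Finset.card_range, nsmul_eq_mul, hAdef]
          ring
  -- Borel--Cantelli along squares
  have hBC : ∀ᵐ φ ∂μ, Tendsto (fun K : ℕ => S (K^2) φ / ((K:ℝ)^2)) atTop (nhds 0) := by
    set G : ℕ → ℝ → ℝ := fun K φ => (S (K^2) φ / ((K:ℝ)^2))^2 with hGdef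
    have hGnn : ∀ K φ, 0 ≤ G K φ := fun K φ => sq_nonneg _
    have hGmeas : ∀ K, Measurable (G K) := by
      intro K
      exact ((hSmeas (K^2)).div_const _).pow_const 2
    have hGint : ∀ K, Integrable (G K) μ := by
      intro K
      have : G K = fun φ => (S (K^2) φ)^2 / (((K:ℝ)^2)^2) := by
        funext φ
        rw [hGdef]
        simp only
        rw [div_pow]
      rw [this]
      exact (hSsqint (K^2)).div_const _
    have hGle : ∀ K : ℕ, ∫ φ, G K φ ∂μ ≤ A / (K:ℝ)^2 := by
      intro K
      rcases Nat.eq_zero_or_pos K with hK | hK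
      · subst hK
        have : ∀ φ, G 0 φ = 0 := by
          intro φ
          rw [hGdef]
          simp [hSdef]
        simp_rw [this]
        simp
      · have hK0 : (0:ℝ) < (K:ℝ)^2 := by positivity
        have heq : ∫ φ, G K φ ∂μ = (∫ φ, (S (K^2) φ)^2 ∂μ) / (((K:ℝ)^2)^2) := by
          have : G K = fun φ => (S (K^2) φ)^2 / (((K:ℝ)^2)^2) := by
            funext φ
            rw [hGdef]
            simp only
            rw [div_pow]
          rw [this, integral_div]
        rw [heq, div_le_div_iff₀ (by positivity) hK0]
        calc (∫ φ, (S (K^2) φ)^2 ∂μ) * (K:ℝ)^2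
            ≤ (((K^2 : ℕ)) : ℝ) * A * (K:ℝ)^2 := by
              apply mul_le_mul_of_nonneg_right (hmom (K^2)) hK0.le
          _ = A * (((K:ℝ)^2)^2) := by
              push_cast
              ring
    -- summability of the series of integrals, hence a.e. summability
    have hsumA : Summable (fun K : ℕ => A / (K:ℝ)^2) := by
      have h0 : Summable (fun K : ℕ => 1 / (K:ℝ)^2) :=
        Real.summable_one_div_nat_pow.mpr one_lt_two
      apply (h0.mul_left A).congr
      intro K
      rw [mul_one_div]
    have hlin : ∫⁻ φ, (∑' K, ENNReal.ofReal (G K φ)) ∂μ ≠ ⊤ := by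
      rw [lintegral_tsum (fun K => ((hGmeas K).ennreal_ofReal).aemeasurable)]
      have heq : ∀ K, ∫⁻ φ, ENNReal.ofReal (G K φ) ∂μ = ENNReal.ofReal (∫ φ, G K φ ∂μ) :=
        fun K => (ofReal_integral_eq_lintegral_ofReal (hGint K)
          (ae_of_all _ (hGnn K))).symm
      simp_rw [heq]
      have hle : ∑' K : ℕ, ENNReal.ofReal (∫ φ, G K φ ∂μ)
          ≤ ∑' K : ℕ, ENNReal.ofReal (A / (K:ℝ)^2) :=
        ENNReal.tsum_le_tsum (fun K => ENNReal.ofReal_le_ofReal (hGle K))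
      apply ne_top_of_le_ne_top _ hle
      rw [← ENNReal.ofReal_tsum_of_nonneg (fun K => by positivity) hsumA]
      exact ENNReal.ofReal_ne_top
    have hae : ∀ᵐ φ ∂μ, (∑' K, ENNReal.ofReal (G K φ)) < ⊤ :=
      ae_lt_top (Measurable.ennreal_tsum (fun K => (hGmeas K).ennreal_ofReal)) hlin
    filter_upwards [hae] with φ hφ
    have hsummable : Summable (fun K => G K φ) := by
      have h1 := ENNReal.summable_toReal hφ.ne
      apply Summable.congr h1
      intro K
      rw [ENNReal.toReal_ofReal (hGnn K φ)]
    have h2 : Tendsto (fun K => G K φ) atTop (nhds 0) := hsummable.tendsto_atTop_zero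
    have h3 : Tendsto (fun K => |S (K^2) φ / ((K:ℝ)^2)|) atTop (nhds 0) := by
      have h4 := (Real.continuous_sqrt.tendsto 0).comp h2
      simp only [Function.comp_def, hGdef, Real.sqrt_sq_eq_abs, Real.sqrt_zero] at h4
      exact h4
    exact (tendsto_zero_iff_abs_tendsto_zero _).mpr h3
  -- interpolation to all N
  have hKtend : Tendsto (fun N : ℕ => Nat.sqrt N) atTop atTop := by
    apply Filter.tendsto_atTop_atTop.mpr
    intro b
    refine ⟨b*b, fun N hN => ?_⟩
    exact Nat.le_sqrt.mpr hN
  filter_upwards [hBC] with φ hφ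
  have hbound : ∀ N : ℕ, 1 ≤ N →
      |(1 / (N:ℝ)) * S N φ| ≤
        |S ((Nat.sqrt N)^2) φ / ((Nat.sqrt N : ℝ)^2)| + 2 * M / (Nat.sqrt N : ℝ) := by
    intro N hN
    set K := Nat.sqrt N with hKdef
    have hK1 : 1 ≤ K := by
      rw [hKdef]
      have := Nat.sqrt_le_sqrt hN
      simpa using this
    have hK2N : K^2 ≤ N := Nat.sqrt_le' N
    have hNK : N ≤ K^2 + 2*K := by
      have h5 := Nat.lt_succ_sqrt' N
      rw [← hKdef] at h5
      have h7 : K.succ^2 = K^2 + 2*K + 1 := by rw [Nat.succ_eq_add_one]; ring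
      omega
    have hKpos : (0:ℝ) < (K:ℝ) := by
      exact_mod_cast hK1
    have hNpos : (0:ℝ) < (N:ℝ) := by
      exact_mod_cast hN
    have hK2le : ((K:ℝ)^2) ≤ (N:ℝ) := by
      have : ((K^2 : ℕ) : ℝ) ≤ (N:ℝ) := Nat.cast_le.mpr hK2N
      push_cast at this
      linarith
    -- split the sum
    have hsplit : S N φ = S (K^2) φ + ∑ n ∈ Finset.Ico (K^2) N, f n φ := by
      rw [hSdef]
      simp only
      rw [Finset.sum_range_add_sum_Ico _ hK2N]
    have htail : |∑ n ∈ Finset.Ico (K^2) N, f n φ| ≤ 2 * (K:ℝ) * M := by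
      calc |∑ n ∈ Finset.Ico (K^2) N, f n φ| ≤ ∑ n ∈ Finset.Ico (K^2) N, |f n φ| :=
            Finset.abs_sum_le_sum_abs _ _
        _ ≤ ∑ _n ∈ Finset.Ico (K^2) N, M := Finset.sum_le_sum (fun n _ => hbd n φ)
        _ = ((N - K^2 : ℕ) : ℝ) * M := by
            rw [Finset.sum_const, Nat.card_Ico, nsmul_eq_mul]
        _ ≤ 2 * (K:ℝ) * M := by
            apply mul_le_mul_of_nonneg_right _ hM
            have : (N - K^2 : ℕ) ≤ 2*K := by omega
            calc ((N - K^2 : ℕ) : ℝ) ≤ ((2*K : ℕ) : ℝ) := Nat.cast_le.mpr this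
              _ = 2 * (K:ℝ) := by push_cast; ring
    have hS1 : |S N φ| ≤ |S (K^2) φ| + 2 * (K:ℝ) * M := by
      rw [hsplit]
      exact le_trans (abs_add_le _ _) (by linarith [htail])
    rw [abs_mul, abs_of_nonneg (show (0:ℝ) ≤ 1/(N:ℝ) by positivity), abs_div,
      abs_of_nonneg (show (0:ℝ) ≤ (K:ℝ)^2 by positivity)]
    have hterm1 : |S (K^2) φ| / (N:ℝ) ≤ |S (K^2) φ| / (K:ℝ)^2 := by
      gcongr
      all_goals first | exact abs_nonneg _ | positivity | exact hK2le
    have hterm2 : 2*(K:ℝ)*M/(N:ℝ) ≤ 2*M/(K:ℝ) := by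
      rw [div_le_div_iff₀ hNpos hKpos]
      have : 2*M*(K:ℝ)^2 ≤ 2*M*(N:ℝ) := by
        apply mul_le_mul_of_nonneg_left hK2le (by positivity)
      nlinarith
    calc 1/(N:ℝ) * |S N φ| ≤ (|S (K^2) φ| + 2*(K:ℝ)*M) / (N:ℝ) := by
          rw [one_div, inv_mul_eq_div]
          gcongr
      _ = |S (K^2) φ| / (N:ℝ) + 2*(K:ℝ)*M/(N:ℝ) := add_div _ _ _
      _ ≤ |S (K^2) φ| / (K:ℝ)^2 + 2*M/(K:ℝ) := add_le_add hterm1 hterm2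
  have hrhs : Tendsto (fun N : ℕ =>
      |S ((Nat.sqrt N)^2) φ / ((Nat.sqrt N : ℝ)^2)| + 2*M/(Nat.sqrt N : ℝ))
      atTop (nhds 0) := by
    have h1 : Tendsto (fun K : ℕ => |S (K^2) φ / ((K:ℝ)^2)|) atTop (nhds 0) :=
      (tendsto_zero_iff_abs_tendsto_zero _).mp hφ
    have h2 := h1.comp hKtend
    have h3 : Tendsto (fun K : ℕ => 2*M/(K:ℝ)) atTop (nhds 0) :=
      tendsto_const_div_atTop_nhds_zero_nat _
    have h4 := h3.comp hKtend
    simpa using h2.add h4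
  apply squeeze_zero_norm' _ hrhs
  filter_upwards [eventually_ge_atTop 1] with N hN
  rw [Real.norm_eq_abs]
  have h := hbound N hN
  have heq : |S ((Nat.sqrt N)^2) φ / ((Nat.sqrt N : ℝ)^2)|
      = |S ((Nat.sqrt N)^2) φ| / ((Nat.sqrt N : ℝ)^2) := by
    rw [abs_div, abs_of_nonneg (by positivity : (0:ℝ) ≤ ((Nat.sqrt N : ℝ)^2))]
  rw [heq] at h ⊢
  exact h
end

section
/- Let A, B ⊆ ℝ be such that A is α-winning for Schmidt's game for some α ∈ (0,1) played on an interval A₀ ⊆ ℝ. Then A ∩ A₀ is dense in A₀ and has Hausdorff dimension 1; in particular any α-winning subset of an interval is thick (full Hausdorff dimension in every nonempty open subinterval). -/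
open MeasureTheory
open scoped NNReal ENNReal

set_option maxHeartbeats 1000000

/-- Schmidt's `(α,β)`-game played on the subset `A₀` of `ℝ` with target set `S`:
Bob first chooses a closed ball `B₀ = B(x 0, ρ)` with `0 < ρ ≤ 1` contained in `A₀`; then
alternately Alice chooses a ball `A_{n+1} = B(y_{n+1}, ρ α (αβ)^n) ⊆ B_n` and Bob chooses
`B_{n+1} = B(x_{n+1}, ρ (αβ)^{n+1}) ⊆ A_{n+1}`.  Alice's strategy `σ` sees `ρ` and the list
of Bob's previous centers.  `S` is `(α,β)`-winning if Alice has a strategy whose moves are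
always legal (against legal play of Bob) and which forces the intersection point into `S`. -/
def AliceWinsSchmidt (α β : ℝ) (S A₀ : Set ℝ) : Prop :=
  ∃ σ : ℝ → List ℝ → ℝ,
    ∀ ρ : ℝ, 0 < ρ → ρ ≤ 1 →
    ∀ x : ℕ → ℝ,
      Metric.closedBall (x 0) ρ ⊆ A₀ →
      (∀ n : ℕ, Metric.closedBall (x (n + 1)) (ρ * (α * β) ^ (n + 1)) ⊆
        Metric.closedBall (σ ρ (List.ofFn fun i : Fin (n + 1) => x i)) (ρ * α * (α * β) ^ n)) →
      (∀ n : ℕ, Metric.closedBall (σ ρ (List.ofFn fun i : Fin (n + 1) => x i))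
          (ρ * α * (α * β) ^ n) ⊆ Metric.closedBall (x n) (ρ * (α * β) ^ n)) ∧
      (∀ z : ℝ, Filter.Tendsto x Filter.atTop (nhds z) → z ∈ S)

/-- `S` is `α`-winning on `A₀` if it is `(α,β)`-winning for every `β ∈ (0,1)`. -/
def IsAlphaWinning (α : ℝ) (S A₀ : Set ℝ) : Prop :=
  ∀ β : ℝ, 0 < β → β < 1 → AliceWinsSchmidt α β S A₀



/-- The recursive game position: list of Bob's centers so far, and the latest center. -/
private noncomputable def schmidtSeq (σ : List ℝ → ℝ) (ch : ℝ → ℕ → ℕ → ℝ) (c : ℝ)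
    (ω : ℕ → ℕ) : ℕ → List ℝ × ℝ
  | 0 => ([c], c)
  | n + 1 =>
    let p := schmidtSeq σ ch c ω n
    let x' := ch (σ p.1) n (ω n)
    (p.1 ++ [x'], x')

private lemma schmidtSeq_fst (σ : List ℝ → ℝ) (ch : ℝ → ℕ → ℕ → ℝ) (c : ℝ) (ω : ℕ → ℕ) :
    ∀ n, (schmidtSeq σ ch c ω n).1
      = List.ofFn (fun i : Fin (n+1) => (schmidtSeq σ ch c ω i).2) := by
  intro n
  induction n with
  | zero => simp [schmidtSeq]
  | succ n ih =>
    rw [List.ofFn_succ']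
    simp only [schmidtSeq, Fin.coe_castSucc, Fin.val_last, List.concat_eq_append]
    rw [← ih]

private lemma schmidtSeq_congr (σ : List ℝ → ℝ) (ch : ℝ → ℕ → ℕ → ℝ) (c : ℝ)
    (ω ω' : ℕ → ℕ) : ∀ n, (∀ i < n, ω i = ω' i) →
    schmidtSeq σ ch c ω n = schmidtSeq σ ch c ω' n := by
  intro n
  induction n with
  | zero => intro; rfl
  | succ n ih =>
    intro h
    have h1 := ih (fun i hi => h i (hi.trans (Nat.lt_succ_self n)))
    simp only [schmidtSeq, h1, h n (Nat.lt_succ_self n)]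


private lemma code_summable {N : ℕ} (hN : 2 ≤ N) (g : ℕ → ℝ)
    (hg : ∀ k, |g k| ≤ (N:ℝ) - 1) :
    Summable (fun k => g k * ((N:ℝ)⁻¹) ^ (k+1)) := by
  have hN1 : (1:ℝ) < (N:ℝ) := by exact_mod_cast hN.trans_lt' one_lt_two
  have hu0 : (0:ℝ) ≤ (N:ℝ)⁻¹ := by positivity
  have hu1 : (N:ℝ)⁻¹ < 1 := by rw [inv_lt_one_iff₀]; right; exact hN1
  have hgeo : Summable (fun k : ℕ => ((N:ℝ) - 1) * ((N:ℝ)⁻¹) ^ (k+1)) :=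
    Summable.mul_left _
      ((summable_geometric_of_lt_one hu0 hu1).comp_injective (add_left_injective 1))
  refine Summable.of_norm_bounded hgeo fun k => ?_
  rw [Real.norm_eq_abs, abs_mul, abs_pow, abs_of_nonneg hu0]
  have h0 : (0:ℝ) ≤ ((N:ℝ)⁻¹)^(k+1) := by positivity
  exact mul_le_mul_of_nonneg_right (hg k) h0

/-- The tail-sum identity: `∑_{k≥0} (N-1) u^{k+n+1} = u^n` for `u = 1/N`. -/
private lemma code_tail {N : ℕ} (hN : 2 ≤ N) (n : ℕ) :
    ∑' k : ℕ, ((N:ℝ) - 1) * ((N:ℝ)⁻¹) ^ (k + n + 1) = ((N:ℝ)⁻¹) ^ n := by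
  have hN1 : (1:ℝ) < (N:ℝ) := by exact_mod_cast hN.trans_lt' one_lt_two
  have hNne : (N:ℝ) ≠ 0 := by positivity
  have hNe : (N:ℝ) - 1 ≠ 0 := by linarith
  have hu0 : (0:ℝ) ≤ (N:ℝ)⁻¹ := by positivity
  have hu1 : (N:ℝ)⁻¹ < 1 := by rw [inv_lt_one_iff₀]; right; exact hN1
  have hgeo : ∑' k : ℕ, ((N:ℝ)⁻¹) ^ k = (1 - (N:ℝ)⁻¹)⁻¹ := tsum_geometric_of_lt_one hu0 hu1
  have h1 : ∀ k : ℕ, ((N:ℝ) - 1) * ((N:ℝ)⁻¹) ^ (k + n + 1)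
      = (((N:ℝ) - 1) * ((N:ℝ)⁻¹) ^ (n+1)) * ((N:ℝ)⁻¹) ^ k := by
    intro k; ring
  rw [tsum_congr h1, tsum_mul_left, hgeo]
  have h2 : (1 - (N:ℝ)⁻¹) = ((N:ℝ) - 1) / N := by field_simp
  rw [h2, inv_div]
  have : ((N:ℝ) - 1) * ((N:ℝ)⁻¹) ^ (n+1) * ((N:ℝ) / ((N:ℝ) - 1))
      = (((N:ℝ)⁻¹) ^ n) * (((N:ℝ)⁻¹) * N) * (((N:ℝ) - 1)/((N:ℝ) - 1)) := by ring
  rw [this, inv_mul_cancel₀ hNne, div_self hNe, mul_one, mul_one]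

private noncomputable def codeVal (N : ℕ) (ω : ℕ → Fin N) : ℝ :=
  ∑' k : ℕ, (ω k : ℝ) * ((N:ℝ)⁻¹) ^ (k+1)

private lemma fin_abs_le {N : ℕ} (hN : 2 ≤ N) (j : Fin N) : |(j : ℝ)| ≤ (N:ℝ) - 1 := by
  rw [abs_of_nonneg (by positivity)]
  have : (j : ℕ) ≤ N - 1 := Nat.le_sub_one_of_lt j.2
  have h2 : ((j:ℕ):ℝ) ≤ ((N - 1 : ℕ) : ℝ) := by exact_mod_cast this
  rwa [Nat.cast_sub (by omega), Nat.cast_one] at h2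

private lemma codeVal_summable {N : ℕ} (hN : 2 ≤ N) (ω : ℕ → Fin N) :
    Summable (fun k => (ω k : ℝ) * ((N:ℝ)⁻¹) ^ (k+1)) :=
  code_summable hN _ (fun k => fin_abs_le hN (ω k))


/-- If two codes agree below `n`, their values differ by at most `(1/N)^n`. -/
private lemma codeVal_dist {N : ℕ} (hN : 2 ≤ N) (ω ω' : ℕ → Fin N) (n : ℕ)
    (h : ∀ i < n, ω i = ω' i) :
    |codeVal N ω - codeVal N ω'| ≤ ((N:ℝ)⁻¹) ^ n := by
  have hs := codeVal_summable hN ω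
  have hs' := codeVal_summable hN ω'
  set f : ℕ → ℝ := fun k => ((ω k : ℝ) - (ω' k : ℝ)) * ((N:ℝ)⁻¹) ^ (k+1) with hf
  have hfs : Summable f := (hs.sub hs').congr (by intro k; simp [hf]; ring)
  have hdiff : codeVal N ω - codeVal N ω' = ∑' k, f k := by
    rw [codeVal, codeVal, ← Summable.tsum_sub hs hs']
    exact tsum_congr fun k => by simp [hf]; ring
  have habs : ∀ k : ℕ, |f (k + n)| ≤ ((N:ℝ) - 1) * ((N:ℝ)⁻¹) ^ (k + n + 1) := by
    intro k
    rw [hf]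
    simp only [abs_mul, abs_pow, abs_of_nonneg (by positivity : (0:ℝ) ≤ (N:ℝ)⁻¹)]
    apply mul_le_mul_of_nonneg_right _ (by positivity)
    calc |(ω (k+n) : ℝ) - (ω' (k+n) : ℝ)| ≤ max (ω (k+n) : ℝ) (ω' (k+n) : ℝ) := by
          rw [abs_sub_le_iff]
          constructor
          · have := le_max_left ((ω (k+n) : ℝ)) ((ω' (k+n) : ℝ))
            have h0 : (0:ℝ) ≤ (ω' (k+n) : ℝ) := by positivity
            linarith
          · have := le_max_right ((ω (k+n) : ℝ)) ((ω' (k+n) : ℝ))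
            have h0 : (0:ℝ) ≤ (ω (k+n) : ℝ) := by positivity
            linarith
    _ ≤ (N:ℝ) - 1 := by
          apply max_le
          · have := fin_abs_le hN (ω (k+n)); rwa [abs_of_nonneg (by positivity)] at this
          · have := fin_abs_le hN (ω' (k+n)); rwa [abs_of_nonneg (by positivity)] at this
  have hgs : Summable (fun k : ℕ => ((N:ℝ) - 1) * ((N:ℝ)⁻¹) ^ (k + n + 1)) := by
    have hN1 : (1:ℝ) < (N:ℝ) := by exact_mod_cast hN.trans_lt' one_lt_two
    have hu0 : (0:ℝ) ≤ (N:ℝ)⁻¹ := by positivity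
    have hu1 : (N:ℝ)⁻¹ < 1 := by rw [inv_lt_one_iff₀]; right; exact hN1
    apply Summable.congr (f := fun k : ℕ => (((N:ℝ) - 1) * ((N:ℝ)⁻¹) ^ (n+1)) * ((N:ℝ)⁻¹) ^ k)
    · exact Summable.mul_left _ (summable_geometric_of_lt_one hu0 hu1)
    · intro k; ring
  have hfns : Summable (fun k : ℕ => ‖f (k + n)‖) := by
    apply Summable.of_nonneg_of_le (fun k => norm_nonneg _) _ hgs
    intro k; exact habs k
  have hsplit := Summable.sum_add_tsum_nat_add n hfs
  have hzero : ∑ i ∈ Finset.range n, f i = 0 := by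
    apply Finset.sum_eq_zero
    intro i hi
    simp only [hf, h i (Finset.mem_range.1 hi), sub_self, zero_mul]
  rw [hdiff, ← hsplit, hzero, zero_add]
  calc |∑' k, f (k + n)| ≤ ∑' k, ‖f (k + n)‖ := norm_tsum_le_tsum_norm hfns
  _ ≤ ∑' k : ℕ, ((N:ℝ) - 1) * ((N:ℝ)⁻¹) ^ (k + n + 1) := Summable.tsum_le_tsum habs hfns hgs
  _ = ((N:ℝ)⁻¹) ^ n := code_tail hN n

/-- Every `t ∈ [0,1]` is the value of some base-`N` code. -/
private lemma exists_code {N : ℕ} (hN : 2 ≤ N) {t : ℝ} (ht : t ∈ Set.Icc (0:ℝ) 1) :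
    ∃ ω : ℕ → Fin N, codeVal N ω = t := by
  have hN0 : (0:ℝ) < (N:ℝ) := by positivity
  have hN1 : (1:ℝ) < (N:ℝ) := by exact_mod_cast hN.trans_lt' one_lt_two
  have hu0 : (0:ℝ) ≤ (N:ℝ)⁻¹ := by positivity
  have hu1 : (N:ℝ)⁻¹ < 1 := by rw [inv_lt_one_iff₀]; right; exact hN1
  rcases eq_or_lt_of_le ht.2 with h1 | h1
  · -- t = 1 : take all digits N-1
    refine ⟨fun _ => ⟨N-1, by omega⟩, ?_⟩
    have hcast : ((N - 1 : ℕ) : ℝ) = (N:ℝ) - 1 := by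
      rw [Nat.cast_sub (by omega), Nat.cast_one]
    have := code_tail hN 0
    simp only [pow_zero] at this
    rw [codeVal, h1, ← this]
    refine tsum_congr fun k => ?_
    show ((N - 1 : ℕ) : ℝ) * _ = _
    rw [hcast]
  · -- t < 1 : greedy digits
    have hD : ∀ y : ℝ, (N:ℤ) * ⌊y⌋ ≤ ⌊(N:ℝ) * y⌋ ∧ ⌊(N:ℝ) * y⌋ ≤ (N:ℤ) * ⌊y⌋ + (N - 1 : ℤ) := by
      intro y
      constructor
      · rw [Int.le_floor]
        push_cast
        exact mul_le_mul_of_nonneg_left (Int.floor_le y) hN0.le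
      · have : ⌊(N:ℝ) * y⌋ < (N:ℤ) * ⌊y⌋ + N := by
          rw [Int.floor_lt]
          push_cast
          have := Int.lt_floor_add_one y
          nlinarith [Int.floor_le y]
        omega
    set D : ℕ → ℤ := fun n => ⌊t * (N:ℝ)^(n+1)⌋ - N * ⌊t * (N:ℝ)^n⌋ with hDdef
    have hDrange : ∀ n, 0 ≤ D n ∧ D n ≤ (N:ℤ) - 1 := by
      intro n
      have h := hD (t * (N:ℝ)^n)
      have he : (N:ℝ) * (t * (N:ℝ)^n) = t * (N:ℝ)^(n+1) := by ring
      rw [he] at h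
      constructor <;> [skip; skip] <;> simp only [hDdef] <;> omega
    set ω : ℕ → Fin N := fun n => ⟨(D n).toNat, by
      have := hDrange n; omega⟩ with hωdef
    have hωcast : ∀ n, ((ω n : ℕ) : ℝ) = ((D n : ℤ) : ℝ) := by
      intro n
      simp only [hωdef]
      exact_mod_cast Int.toNat_of_nonneg (hDrange n).1
    -- partial sums equal ⌊t N^n⌋ / N^n
    have hfloor0 : ⌊t⌋ = 0 := Int.floor_eq_zero_iff.2 ⟨ht.1, h1⟩
    have hpartial : ∀ n, ∑ k ∈ Finset.range n, (ω k : ℝ) * ((N:ℝ)⁻¹) ^ (k+1)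
        = (⌊t * (N:ℝ)^n⌋ : ℝ) / (N:ℝ)^n := by
      intro n
      induction n with
      | zero => simp [hfloor0]
      | succ n ih =>
        rw [Finset.sum_range_succ, ih, hωcast n, hDdef]
        push_cast
        generalize ((⌊t * (N:ℝ)^n⌋ : ℤ) : ℝ) = A
        generalize ((⌊t * (N:ℝ)^(n+1)⌋ : ℤ) : ℝ) = B
        have hN' : (N:ℝ) ≠ 0 := by positivity
        linear_combination (-(A * ((N:ℝ)^n)⁻¹)) * mul_inv_cancel₀ hN'
    -- convergence
    have hsummable := codeVal_summable hN ω
    refine ⟨ω, ?_⟩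
    have htendsto : Filter.Tendsto (fun n => ∑ k ∈ Finset.range n, (ω k : ℝ) * ((N:ℝ)⁻¹) ^ (k+1))
        Filter.atTop (nhds t) := by
      rw [tendsto_iff_dist_tendsto_zero]
      apply squeeze_zero (fun n => dist_nonneg) (g := fun n => ((N:ℝ)⁻¹)^n)
      · intro n
        rw [hpartial n, Real.dist_eq, inv_pow]
        set P : ℝ := (⌊t * (N:ℝ)^n⌋ : ℝ) with hP
        have hp : (0:ℝ) < (N:ℝ)^n := by positivity
        have h3 : P ≤ t * (N:ℝ)^n := Int.floor_le _
        have h4 : t * (N:ℝ)^n ≤ P + 1 := (Int.lt_floor_add_one _).le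
        have h5 : 0 ≤ t - P/(N:ℝ)^n := by
          rw [sub_nonneg, div_le_iff₀ hp]; exact h3
        have h6 : t - P/(N:ℝ)^n ≤ ((N:ℝ)^n)⁻¹ := by
          rw [sub_le_iff_le_add, inv_eq_one_div, ← add_div, le_div_iff₀ hp]
          linarith
        rw [abs_sub_comm, abs_of_nonneg h5]
        exact h6
      · exact tendsto_pow_atTop_nhds_zero_of_lt_one hu0 hu1
    exact ((Summable.hasSum_iff_tendsto_nat hsummable).2 htendsto).tsum_eq

/-- Main construction: the winning set has dimension at least `d` in every legal starting ball. -/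
private lemma dimH_winning_ball (α : ℝ) (hα0 : 0 < α) (hα1 : α < 1)
    (A A₀ : Set ℝ) (hwin : IsAlphaWinning α A A₀)
    (c ρ : ℝ) (hρ0 : 0 < ρ) (hρ1 : ρ ≤ 1)
    (hball : Metric.closedBall c ρ ⊆ A₀) (d : ℝ≥0) (hd : (d:ℝ) < 1) :
    (d : ℝ≥0∞) ≤ dimH (A ∩ Metric.closedBall c ρ) := by
  rcases eq_or_lt_of_le (zero_le : (0:ℝ≥0) ≤ d) with hd0 | hd0
  · rw [← hd0]; exact zero_le
  have hd0' : (0:ℝ) < (d:ℝ) := hd0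
  have h1d : (0:ℝ) < 1 - (d:ℝ) := by linarith
  -- Step 1: choose N
  have h2α : (0:ℝ) < 2/α := by positivity
  set T : ℝ := (2/α) ^ ((d:ℝ)/(1-(d:ℝ))) with hT
  have hTpos : 0 < T := Real.rpow_pos_of_pos h2α _
  set N : ℕ := max 2 (⌈T⌉₊ + 1) with hNdef
  have hN : 2 ≤ N := le_max_left _ _
  have hNR : (1:ℝ) < (N:ℝ) := by exact_mod_cast hN.trans_lt' one_lt_two
  have hNpos : (0:ℝ) < (N:ℝ) := by linarith
  have hNT : T ≤ (N:ℝ) := by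
    have h1 : T ≤ (⌈T⌉₊ : ℝ) := Nat.le_ceil T
    have h2 : (⌈T⌉₊ : ℝ) ≤ (N:ℝ) := by
      have : ⌈T⌉₊ ≤ N := le_of_lt (lt_of_lt_of_le (Nat.lt_succ_self _) (le_max_right _ _))
      exact_mod_cast this
    linarith
  have hTpow : T ^ (1-(d:ℝ)) = (2/α) ^ (d:ℝ) := by
    rw [hT, ← Real.rpow_mul h2α.le, div_mul_cancel₀ _ h1d.ne']
  have hN1d : (2/α) ^ (d:ℝ) ≤ (N:ℝ) ^ (1-(d:ℝ)) := by
    rw [← hTpow]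
    exact Real.rpow_le_rpow hTpos.le hNT h1d.le
  set β : ℝ := (2*(N:ℝ))⁻¹ with hβ
  have hβ0 : 0 < β := by positivity
  have hβ1 : β < 1 := by
    rw [hβ, inv_lt_one_iff₀]; right; linarith
  set q : ℝ := α * β with hq
  have hq0 : 0 < q := by positivity
  have hq1 : q < 1 := by
    calc q = α * β := hq
    _ < 1 * 1 := by apply mul_lt_mul' hα1.le hβ1 hβ0.le (by linarith)
    _ = 1 := by ring
  -- key inequality : 1/N ≤ q^d
  have hkey : (N:ℝ)⁻¹ ≤ q ^ (d:ℝ) := by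
    have hNsplit : (N:ℝ) = (N:ℝ)^(d:ℝ) * (N:ℝ)^(1-(d:ℝ)) := by
      rw [← Real.rpow_add hNpos]
      norm_num
    have h8 : (2/α)^(d:ℝ) * (α^(d:ℝ) * (N:ℝ)^(d:ℝ))
        ≤ (N:ℝ)^(1-(d:ℝ)) * (α^(d:ℝ) * (N:ℝ)^(d:ℝ)) :=
      mul_le_mul_of_nonneg_right hN1d (by positivity)
    have h9 : (2/α)^(d:ℝ) * α^(d:ℝ) = 2^(d:ℝ) := by
      rw [Real.div_rpow (by norm_num) hα0.le, div_mul_cancel₀]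
      positivity
    have h7 : (2*(N:ℝ))^(d:ℝ) ≤ α^(d:ℝ) * (N:ℝ) := by
      rw [Real.mul_rpow (by norm_num) hNpos.le]
      calc (2:ℝ)^(d:ℝ) * (N:ℝ)^(d:ℝ) = (2/α)^(d:ℝ) * α^(d:ℝ) * (N:ℝ)^(d:ℝ) := by rw [h9]
      _ ≤ (N:ℝ)^(1-(d:ℝ)) * (α^(d:ℝ) * (N:ℝ)^(d:ℝ)) := by
          calc (2/α)^(d:ℝ) * α^(d:ℝ) * (N:ℝ)^(d:ℝ)
              = (2/α)^(d:ℝ) * (α^(d:ℝ) * (N:ℝ)^(d:ℝ)) := by ring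
          _ ≤ _ := h8
      _ = α^(d:ℝ) * ((N:ℝ)^(d:ℝ) * (N:ℝ)^(1-(d:ℝ))) := by ring
      _ = α^(d:ℝ) * (N:ℝ) := by rw [← hNsplit]
    have hq_eq : q = α / (2*(N:ℝ)) := by rw [hq, hβ, div_eq_mul_inv]
    rw [hq_eq, Real.div_rpow hα0.le (by positivity), inv_eq_one_div,
      div_le_div_iff₀ hNpos (by positivity)]
    rw [one_mul]
    linarith
  -- Step 2: the strategy
  obtain ⟨σ, hσ⟩ := hwin β hβ0 hβ1
  -- Step 3: the children function and game sequences
  set m : ℝ := (N:ℝ) - 1 with hm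
  have hNR2 : (2:ℝ) ≤ (N:ℝ) := by exact_mod_cast hN
  have hm1 : (1:ℝ) ≤ m := by rw [hm]; linarith
  have hm0 : (0:ℝ) < m := by linarith
  set e : ℝ := α*ρ*(1-β)/m with he
  have he0 : 0 < e := by
    apply div_pos _ hm0
    have : 0 < 1 - β := by linarith
    positivity
  set ch : ℝ → ℕ → ℕ → ℝ := fun y n j => y + ((2*(j:ℝ)) - m) * (e * q^n) with hch
  set x : (ℕ → Fin N) → ℕ → ℝ :=
    fun ω n => (schmidtSeq (σ ρ) ch c (fun i => (ω i : ℕ)) n).2 with hx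
  have hx0 : ∀ ω, x ω 0 = c := fun ω => rfl
  have hxsucc : ∀ ω n, x ω (n+1)
      = ch (σ ρ (schmidtSeq (σ ρ) ch c (fun i => (ω i : ℕ)) n).1) n (ω n) := by
    intro ω n; rfl
  have hofFn : ∀ ω n, (List.ofFn fun i : Fin (n+1) => x ω i)
      = (schmidtSeq (σ ρ) ch c (fun i => (ω i : ℕ)) n).1 := by
    intro ω n
    rw [schmidtSeq_fst]
  -- children stay in Alice's ball
  have hchild : ∀ y n (j : Fin N), Metric.closedBall (ch y n (j:ℕ)) (ρ * q^(n+1))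
      ⊆ Metric.closedBall y (ρ * α * q^n) := by
    intro y n j
    apply Metric.closedBall_subset_closedBall'
    have hdist : dist (ch y n (j:ℕ)) y = |((2*((j:ℕ):ℝ)) - m)| * (e * q^n) := by
      simp only [hch, Real.dist_eq, add_sub_cancel_left]
      rw [abs_mul, abs_of_pos (by positivity : (0:ℝ) < e * q^n)]
    have habs : |((2*((j:ℕ):ℝ)) - m)| ≤ m := by
      rw [abs_le]
      have hj0 : (0:ℝ) ≤ ((j:ℕ):ℝ) := by positivity
      have hjm : ((j:ℕ):ℝ) ≤ m := by
        rw [hm]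
        have : (j:ℕ) ≤ N - 1 := Nat.le_sub_one_of_lt j.2
        have h2 : ((j:ℕ):ℝ) ≤ ((N-1:ℕ):ℝ) := by exact_mod_cast this
        rwa [Nat.cast_sub (by omega), Nat.cast_one] at h2
      constructor <;> nlinarith
    rw [hdist]
    have h1 : |((2*((j:ℕ):ℝ)) - m)| * (e * q^n) ≤ m * (e * q^n) :=
      mul_le_mul_of_nonneg_right habs (by positivity)
    have h2 : m * e = α*ρ*(1-β) := by rw [he]; field_simp
    have h3 : ρ * q^(n+1) = α*ρ*β * q^n := by rw [pow_succ, hq]; ring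
    have h4 : m * (e * q^n) = α*ρ*(1-β) * q^n := by rw [← mul_assoc, h2]
    have h5 : α*ρ*β*q^n + α*ρ*(1-β)*q^n = ρ*α*q^n := by ring
    linarith
  -- legality of Bob's play
  have hlegal : ∀ ω n, Metric.closedBall (x ω (n+1)) (ρ * q^(n+1)) ⊆
      Metric.closedBall (σ ρ (List.ofFn fun i : Fin (n+1) => x ω i)) (ρ * α * q^n) := by
    intro ω n
    rw [hofFn, hxsucc]
    exact hchild _ n (ω n)
  -- apply the strategy's guarantee
  have hσ' := fun ω => hσ ρ hρ0 hρ1 (x ω) (by rw [hx0]; exact hball) (hlegal ω)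
  have hnest : ∀ ω n, Metric.closedBall (x ω (n+1)) (ρ * q^(n+1)) ⊆
      Metric.closedBall (x ω n) (ρ * q^n) :=
    fun ω n => (hlegal ω n).trans ((hσ' ω).1 n)
  have hnest' : ∀ ω n k, n ≤ k → Metric.closedBall (x ω k) (ρ * q^k) ⊆
      Metric.closedBall (x ω n) (ρ * q^n) := by
    intro ω n k hnk
    induction k, hnk using Nat.le_induction with
    | base => exact subset_rfl
    | succ k hnk ih => exact (hnest ω k).trans ih
  -- convergence
  have hmain : ∀ ω : ℕ → Fin N, ∃ z : ℝ, z ∈ A ∧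
      ∀ n, z ∈ Metric.closedBall (x ω n) (ρ * q^n) := by
    intro ω
    have hcauchy : CauchySeq (x ω) := by
      apply cauchySeq_of_le_geometric q ρ hq1
      intro n
      have h1 : x ω (n+1) ∈ Metric.closedBall (x ω n) (ρ * q^n) :=
        hnest ω n (Metric.mem_closedBall_self (by positivity))
      rw [Metric.mem_closedBall] at h1
      rw [dist_comm]
      exact h1
    obtain ⟨z, hz⟩ := cauchySeq_tendsto_of_complete hcauchy
    refine ⟨z, (hσ' ω).2 z hz, fun n => ?_⟩
    apply Metric.isClosed_closedBall.mem_of_tendsto hz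
    filter_upwards [Filter.eventually_ge_atTop n] with k hk
    exact hnest' ω n k hk (Metric.mem_closedBall_self (by positivity))
  choose z hzA hzball using hmain
  -- separation
  have hsep : ∀ ω ω' : ℕ → Fin N, ∀ n, (∀ i < n, ω i = ω' i) → ω n ≠ ω' n →
      (α*ρ/m) * q^n ≤ |z ω - z ω'| := by
    intro ω ω' n hlt hne
    have hseq : schmidtSeq (σ ρ) ch c (fun i => (ω i : ℕ)) n
        = schmidtSeq (σ ρ) ch c (fun i => (ω' i : ℕ)) n :=
      schmidtSeq_congr _ _ _ _ _ n (fun i hi => by rw [hlt i hi])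
    have hE0 : (0:ℝ) < e * q^n := by positivity
    have hxx : 2 * (e * q^n) ≤ |x ω (n+1) - x ω' (n+1)| := by
      rw [hxsucc, hxsucc, hseq]
      simp only [hch]
      have harith : ∀ u v w E : ℝ, u + (2*v - m)*E - (u + (2*w - m)*E) = 2*(v-w)*E := by
        intros; ring
      rw [harith]
      have hv : ((ω n : ℕ):ℤ) ≠ ((ω' n : ℕ):ℤ) := by
        intro h
        exact hne (Fin.ext (by exact_mod_cast h))
      have h1ab : (1:ℝ) ≤ |(((ω n : ℕ)):ℝ) - (((ω' n : ℕ)):ℝ)| := by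
        have := Int.one_le_abs (sub_ne_zero.2 hv)
        exact_mod_cast this
      rw [abs_mul, abs_mul]
      rw [abs_of_pos (by norm_num : (0:ℝ) < 2), abs_of_pos hE0]
      nlinarith
    have hz1 : dist (z ω) (x ω (n+1)) ≤ ρ * q^(n+1) := hzball ω (n+1)
    have hz2 : dist (z ω') (x ω' (n+1)) ≤ ρ * q^(n+1) := hzball ω' (n+1)
    have h4 := dist_triangle4 (x ω (n+1)) (z ω) (z ω') (x ω' (n+1))
    rw [Real.dist_eq, Real.dist_eq, Real.dist_eq, Real.dist_eq] at h4
    rw [Real.dist_eq] at hz1 hz2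
    have e1 : |x ω (n+1) - z ω| = |z ω - x ω (n+1)| := abs_sub_comm _ _
    have e2 : |z ω' - x ω' (n+1)| = |z ω' - x ω' (n+1)| := rfl
    have hmne : (N:ℝ) - 1 ≠ 0 := by rw [← hm]; exact hm0.ne'
    have hiden : 2*e - 2*ρ*q = α*ρ/m := by
      rw [he, hq, hβ, hm]
      field_simp
      ring
    have hiden2 : (α*ρ/m) * q^n = 2*(e*q^n) - 2*(ρ*q^(n+1)) := by
      rw [← hiden, pow_succ]; ring
    rw [hiden2]
    linarith
  -- injectivity
  have hinj : Function.Injective z := by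
    intro ω ω' hzz
    by_contra hne
    have hex : ∃ n, ω n ≠ ω' n := by
      by_contra hforall
      push_neg at hforall
      exact hne (funext hforall)
    classical
    let n := Nat.find hex
    have hn1 : ω n ≠ ω' n := Nat.find_spec hex
    have hn2 : ∀ i < n, ω i = ω' i := fun i hi =>
      not_not.1 (Nat.find_min hex hi)
    have := hsep ω ω' n hn2 hn1
    rw [hzz, sub_self, abs_zero] at this
    have hKq : (0:ℝ) < (α*ρ/m) * q^n := by positivity
    linarith
  -- the coding map
  haveI : Nonempty (ℕ → Fin N) := ⟨fun _ => ⟨0, by omega⟩⟩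
  set f : ℝ → ℝ := (codeVal N) ∘ (Function.invFun z) with hfdef
  have hfz : ∀ ω, f (z ω) = codeVal N ω := by
    intro ω
    simp only [hfdef, Function.comp_apply]
    rw [Function.leftInverse_invFun hinj ω]
  -- Hölder continuity of f on range z
  set K : ℝ := α*ρ/m with hK
  have hK0 : 0 < K := by positivity
  set C₀ : ℝ := (K⁻¹) ^ (d:ℝ) with hC₀
  have hC₀0 : 0 < C₀ := Real.rpow_pos_of_pos (by positivity) _
  have hholder : HolderOnWith (Real.toNNReal C₀) d f (Set.range z) := by
    intro u hu v hv
    obtain ⟨ω, rfl⟩ := hu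
    obtain ⟨ω', rfl⟩ := hv
    rcases eq_or_ne ω ω' with rfl | hne
    · simp
    -- least index of difference
    have hex : ∃ n, ω n ≠ ω' n := by
      by_contra hforall
      push_neg at hforall
      exact hne (funext hforall)
    classical
    set n := Nat.find hex with hn
    have hn1 : ω n ≠ ω' n := Nat.find_spec hex
    have hn2 : ∀ i < n, ω i = ω' i := fun i hi => not_not.1 (Nat.find_min hex hi)
    have hF := codeVal_dist hN ω ω' n hn2
    have hZ := hsep ω ω' n hn2 hn1
    -- real inequality
    have hreal : dist (f (z ω)) (f (z ω')) ≤ C₀ * dist (z ω) (z ω') ^ (d:ℝ) := by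
      rw [hfz, hfz, Real.dist_eq, Real.dist_eq]
      have hqn0 : (0:ℝ) ≤ q^n := by positivity
      have step1 : |codeVal N ω - codeVal N ω'| ≤ (q^n) ^ (d:ℝ) := by
        refine hF.trans ?_
        calc ((N:ℝ)⁻¹)^n ≤ (q ^ (d:ℝ))^n :=
              pow_le_pow_left₀ (by positivity) hkey n
        _ = (q^n) ^ (d:ℝ) := by
              rw [← Real.rpow_natCast (q ^ (d:ℝ)) n, ← Real.rpow_mul hq0.le,
                mul_comm, Real.rpow_mul hq0.le, Real.rpow_natCast]
      have step2 : q^n ≤ |z ω - z ω'| / K := by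
        rw [le_div_iff₀ hK0]
        calc q^n * K = K * q^n := by ring
        _ ≤ |z ω - z ω'| := hZ
      have step3 : (q^n) ^ (d:ℝ) ≤ (|z ω - z ω'| / K) ^ (d:ℝ) :=
        Real.rpow_le_rpow hqn0 step2 d.coe_nonneg
      have step4 : (|z ω - z ω'| / K) ^ (d:ℝ) = C₀ * |z ω - z ω'| ^ (d:ℝ) := by
        rw [div_eq_mul_inv, Real.mul_rpow (abs_nonneg _) (by positivity), hC₀]
        ring
      calc |codeVal N ω - codeVal N ω'| ≤ (q^n) ^ (d:ℝ) := step1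
      _ ≤ (|z ω - z ω'| / K) ^ (d:ℝ) := step3
      _ = C₀ * |z ω - z ω'| ^ (d:ℝ) := step4
    -- convert to edist
    rw [edist_dist, edist_dist]
    have hco : (Real.toNNReal C₀ : ℝ≥0∞) = ENNReal.ofReal C₀ := rfl
    rw [hco, ENNReal.ofReal_rpow_of_nonneg dist_nonneg d.coe_nonneg,
      ← ENNReal.ofReal_mul hC₀0.le]
    exact ENNReal.ofReal_le_ofReal hreal
  -- assembling
  have hsub : Set.range z ⊆ A ∩ Metric.closedBall c ρ := by
    rintro _ ⟨ω, rfl⟩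
    refine ⟨hzA ω, ?_⟩
    have := hzball ω 0
    simpa [hx0] using this
  have himg : Set.Icc (0:ℝ) 1 ⊆ f '' Set.range z := by
    intro t ht
    obtain ⟨ω, hω⟩ := exists_code hN ht
    exact ⟨z ω, Set.mem_range_self ω, by rw [hfz, hω]⟩
  have hIcc : dimH (Set.Icc (0:ℝ) 1) = 1 := by
    rw [Real.dimH_of_nonempty_interior (E := ℝ) (s := Set.Icc (0:ℝ) 1)]
    · simp
    · rw [interior_Icc]
      exact ⟨1/2, by norm_num⟩
  have h1le : (1:ℝ≥0∞) ≤ dimH (f '' Set.range z) := by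
    rw [← hIcc]
    exact dimH_mono himg
  have himle := hholder.dimH_image_le hd0
  have hdle : (d : ℝ≥0∞) ≤ dimH (Set.range z) := by
    have h6 : (1:ℝ≥0∞) ≤ dimH (Set.range z) / (d : ℝ≥0∞) := h1le.trans himle
    rw [ENNReal.le_div_iff_mul_le (Or.inl (by exact_mod_cast hd0.ne'))
      (Or.inl ENNReal.coe_ne_top), one_mul] at h6
    exact h6
  exact hdle.trans (dimH_mono hsub)


/-- An `α`-winning subset of an interval `A₀ = [a,b]` is dense in `A₀`, has
full Hausdorff dimension `1`, and is thick: it has full Hausdorff dimension in every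
nonempty open subinterval. -/
theorem winning_sets_are_thick
    (α : ℝ) (hα0 : 0 < α) (hα1 : α < 1)
    (a b : ℝ) (hab : a < b)
    (A : Set ℝ) (hwin : IsAlphaWinning α A (Set.Icc a b)) :
    (∀ x ∈ Set.Icc a b, x ∈ closure (A ∩ Set.Icc a b)) ∧
    dimH (A ∩ Set.Icc a b) = 1 ∧
    ∀ U : Set ℝ, IsOpen U → (U ∩ Set.Ioo a b).Nonempty →
      dimH (A ∩ Set.Icc a b ∩ U) = 1 := by
  have hle : ∀ s : Set ℝ, dimH s ≤ 1 := by
    intro s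
    calc dimH s ≤ dimH (Set.univ : Set ℝ) := dimH_mono (Set.subset_univ s)
    _ = 1 := by rw [Real.dimH_univ_eq_finrank]; simp
  have hge1 : ∀ c ρ : ℝ, 0 < ρ → ρ ≤ 1 → Metric.closedBall c ρ ⊆ Set.Icc a b →
      (1:ℝ≥0∞) ≤ dimH (A ∩ Metric.closedBall c ρ) := by
    intro c ρ h1 h2 h3
    apply ENNReal.le_of_forall_nnreal_lt
    intro r hr
    have hr1 : (r:ℝ) < 1 := by exact_mod_cast hr
    exact dimH_winning_ball α hα0 hα1 A (Set.Icc a b) hwin c ρ h1 h2 h3 r hr1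
  have hne : ∀ c ρ : ℝ, 0 < ρ → ρ ≤ 1 → Metric.closedBall c ρ ⊆ Set.Icc a b →
      (A ∩ Metric.closedBall c ρ).Nonempty := by
    intro c ρ h1 h2 h3
    rw [Set.nonempty_iff_ne_empty]
    intro hemp
    have := hge1 c ρ h1 h2 h3
    rw [hemp, dimH_empty] at this
    simp at this
  refine ⟨?_, ?_, ?_⟩
  · -- density
    intro x hx
    rw [Metric.mem_closure_iff]
    intro ε hε
    set ρ' : ℝ := min (ε/4) (min 1 ((b-a)/4)) with hρ'
    have hρ'0 : 0 < ρ' := by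
      apply lt_min (by linarith)
      apply lt_min one_pos (by linarith)
    have hρ'1 : ρ' ≤ 1 := le_trans (min_le_right _ _) (min_le_left _ _)
    have hρ'ε : ρ' ≤ ε/4 := min_le_left _ _
    have hρ'ab : ρ' ≤ (b-a)/4 := le_trans (min_le_right _ _) (min_le_right _ _)
    set c' : ℝ := max (a+ρ') (min x (b-ρ')) with hc'
    have hsub : Metric.closedBall c' ρ' ⊆ Set.Icc a b := by
      rw [Real.closedBall_eq_Icc]
      apply Set.Icc_subset_Icc
      · have : a + ρ' ≤ c' := le_max_left _ _
        linarith
      · have h5 : a + ρ' ≤ b - ρ' := by linarith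
        have h6 : min x (b-ρ') ≤ b - ρ' := min_le_right _ _
        have : c' ≤ b - ρ' := max_le h5 h6
        linarith
    have hcx : |c' - x| ≤ ρ' := by
      rw [abs_le]
      constructor
      · have h7 : min x (b-ρ') ≤ c' := le_max_right _ _
        have h8 : x - ρ' ≤ min x (b-ρ') := by
          apply le_min (by linarith)
          have := hx.2
          linarith
        linarith
      · have h9 : a + ρ' ≤ x + ρ' := by have := hx.1; linarith
        have h10 : min x (b-ρ') ≤ x + ρ' := le_trans (min_le_left _ _) (by linarith)
        have : c' ≤ x + ρ' := max_le h9 h10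
        linarith
    obtain ⟨y, hyA, hyB⟩ := hne c' ρ' hρ'0 hρ'1 hsub
    refine ⟨y, ⟨hyA, hsub hyB⟩, ?_⟩
    rw [Metric.mem_closedBall, Real.dist_eq] at hyB
    rw [Real.dist_eq]
    have : |x - y| ≤ |x - c'| + |c' - y| := abs_sub_le _ _ _
    rw [abs_sub_comm x c'] at this
    rw [abs_sub_comm y c'] at hyB
    linarith
  · -- full dimension
    set ρ₀ : ℝ := min 1 ((b-a)/2) with hρ₀
    have hρ₀0 : 0 < ρ₀ := lt_min one_pos (by linarith)
    have hρ₀1 : ρ₀ ≤ 1 := min_le_left _ _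
    have hsub : Metric.closedBall ((a+b)/2) ρ₀ ⊆ Set.Icc a b := by
      rw [Real.closedBall_eq_Icc]
      apply Set.Icc_subset_Icc
      · have : ρ₀ ≤ (b-a)/2 := min_le_right _ _
        linarith
      · have : ρ₀ ≤ (b-a)/2 := min_le_right _ _
        linarith
    apply le_antisymm (hle _)
    calc (1:ℝ≥0∞) ≤ dimH (A ∩ Metric.closedBall ((a+b)/2) ρ₀) :=
          hge1 _ _ hρ₀0 hρ₀1 hsub
    _ ≤ dimH (A ∩ Set.Icc a b) := dimH_mono (Set.inter_subset_inter_right A hsub)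
  · -- thickness
    intro U hU ⟨x, hxU, hxI⟩
    obtain ⟨ε, hε0, hεsub⟩ := Metric.isOpen_iff.1 hU x hxU
    set ρ' : ℝ := min (ε/2) (min 1 (min (x-a) (b-x))) with hρ'
    have hxa : 0 < x - a := by have := hxI.1; linarith
    have hxb : 0 < b - x := by have := hxI.2; linarith
    have hρ'0 : 0 < ρ' := by
      apply lt_min (by linarith)
      exact lt_min one_pos (lt_min hxa hxb)
    have hρ'1 : ρ' ≤ 1 := le_trans (min_le_right _ _) (min_le_left _ _)
    have hρ'a : ρ' ≤ x - a := le_trans (min_le_right _ _)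
      (le_trans (min_le_right _ _) (min_le_left _ _))
    have hρ'b : ρ' ≤ b - x := le_trans (min_le_right _ _)
      (le_trans (min_le_right _ _) (min_le_right _ _))
    have hsubI : Metric.closedBall x ρ' ⊆ Set.Icc a b := by
      rw [Real.closedBall_eq_Icc]
      apply Set.Icc_subset_Icc <;> linarith
    have hsubU : Metric.closedBall x ρ' ⊆ U := by
      refine le_trans (Metric.closedBall_subset_ball ?_) hεsub
      have : ρ' ≤ ε/2 := min_le_left _ _
      linarith
    apply le_antisymm (hle _)
    calc (1:ℝ≥0∞) ≤ dimH (A ∩ Metric.closedBall x ρ') := hge1 _ _ hρ'0 hρ'1 hsubI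
    _ ≤ dimH (A ∩ Set.Icc a b ∩ U) := by
        apply dimH_mono
        intro y ⟨hy1, hy2⟩
        exact ⟨⟨hy1, hsubI hy2⟩, hsubU hy2⟩
end
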